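/- arXiv:2409.07666 — 3 statements merged into one kernel-verified Lean document; each statement's English description precedes it below -/
import Mathlib

section
/- (Theorem 1, part 1) Under Assumption 1, 𝒦_{𝒮,ext} ⊆ 𝒦̂_{𝒮,ext}: if Z̃ and G̃ are clique-block-diagonal, Q̃ ≻ 0, and there exist ρ ∈ ℝ and η > 0 with Ψ(G̃,Q̃,Z̃) + ρM ≻ 0 and G̃ᵀN₀ + N₀G̃ ⪰ ηN₀, then G̃ is invertible and there exists μ ∈ ℝ such that Ψ(G̃,Q̃,Z̃) + μ H̃ᵀMH̃ ≻ 0 with H̃ = blkdiag(G̃,G̃); in particular the gain (EᵀE)⁻¹Eᵀ Z̃ G̃⁻¹ E belongs to 𝒦̂_{𝒮,ext}. -/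
open Matrix

/-- Block index set: `Idx dims` indexes the rows/columns of an `n × n` matrix
partitioned into blocks of sizes `dims 0, …, dims (N-1)`. -/
abbrev Idx {N : ℕ} (dims : Fin N → ℕ) : Type := Σ i : Fin N, Fin (dims i)

/-- The sparsity set `𝒮`: the `(i,j)` block vanishes whenever `i ≠ j` and `(i,j) ∉ ℰ`. -/
def Sparse {N : ℕ} (Gr : SimpleGraph (Fin N)) (dims : Fin N → ℕ)
    (K : Matrix (Idx dims) (Idx dims) ℝ) : Prop :=
  ∀ i j : Fin N, i ≠ j → ¬ Gr.Adj i j →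
    ∀ (a : Fin (dims i)) (b : Fin (dims j)), K ⟨i, a⟩ ⟨j, b⟩ = 0

/-- Block-diagonal (w.r.t. the partition `dims`): off-diagonal blocks vanish. -/
def BlkDiag {N : ℕ} (dims : Fin N → ℕ) (K : Matrix (Idx dims) (Idx dims) ℝ) : Prop :=
  ∀ p r : Idx dims, p.1 ≠ r.1 → K p r = 0

/-- `X ≺ 0`: negative definiteness. -/
def NegDef {m : Type*} [Fintype m] (X : Matrix m m ℝ) : Prop := (-X).PosDef

/-- Row index set of the stacked clique selector matrix `E`. -/
abbrev CIdx {N q : ℕ} (dims : Fin N → ℕ) (C : Fin q → Finset (Fin N)) : Type :=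
  Σ k : Fin q, Σ j : {x : Fin N // x ∈ C k}, Fin (dims j.1)

/-- The stacked selector matrix `E = [E_{C_1}ᵀ, …, E_{C_q}ᵀ]ᵀ`. -/
def Emat {N q : ℕ} (dims : Fin N → ℕ) (C : Fin q → Finset (Fin N)) :
    Matrix (CIdx dims C) (Idx dims) ℝ :=
  fun p i => if (⟨p.2.1.1, p.2.2⟩ : Idx dims) = i then 1 else 0

/-- Clique-block-diagonal matrices `blkdiag(X_1, …, X_q)` with `X_k ∈ ℝ^{n_{C_k} × n_{C_k}}`. -/
def CliqueBlkDiag {N q : ℕ} (dims : Fin N → ℕ) (C : Fin q → Finset (Fin N))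
    (X : Matrix (CIdx dims C) (CIdx dims C) ℝ) : Prop :=
  ∀ p r : CIdx dims C, p.1 ≠ r.1 → X p r = 0

/-- `C_1, …, C_q` are cliques of the graph. -/
def IsCliques {N q : ℕ} (Gr : SimpleGraph (Fin N)) (C : Fin q → Finset (Fin N)) : Prop :=
  ∀ k : Fin q, ∀ i ∈ C k, ∀ j ∈ C k, i ≠ j → Gr.Adj i j

/-- Assumption 1: every node is covered, and two distinct nodes share a clique iff adjacent. -/
def Assumption1 {N q : ℕ} (Gr : SimpleGraph (Fin N)) (C : Fin q → Finset (Fin N)) : Prop :=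
  (∀ i : Fin N, ∃ k, i ∈ C k) ∧
    ∀ i j : Fin N, i ≠ j → ((∃ k, i ∈ C k ∧ j ∈ C k) ↔ Gr.Adj i j)

/-- `N₀ = I − E (EᵀE)⁻¹ Eᵀ`. -/
noncomputable def N0 {N q : ℕ} (dims : Fin N → ℕ) (C : Fin q → Finset (Fin N)) :
    Matrix (CIdx dims C) (CIdx dims C) ℝ :=
  1 - Emat dims C * ((Emat dims C)ᵀ * Emat dims C)⁻¹ * (Emat dims C)ᵀ

/-- `M = blkdiag(N₀, N₀)`. -/
noncomputable def Mmat {N q : ℕ} (dims : Fin N → ℕ) (C : Fin q → Finset (Fin N)) :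
    Matrix (CIdx dims C ⊕ CIdx dims C) (CIdx dims C ⊕ CIdx dims C) ℝ :=
  fromBlocks (N0 dims C) 0 0 (N0 dims C)

/-- Dilation `X̃ = E X (EᵀE)⁻¹ Eᵀ`. -/
noncomputable def tilde {N q : ℕ} (dims : Fin N → ℕ) (C : Fin q → Finset (Fin N))
    (X : Matrix (Idx dims) (Idx dims) ℝ) : Matrix (CIdx dims C) (CIdx dims C) ℝ :=
  Emat dims C * X * ((Emat dims C)ᵀ * Emat dims C)⁻¹ * (Emat dims C)ᵀ

/-- The gain `(EᵀE)⁻¹ Eᵀ Z̃ G̃⁻¹ E`. -/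
noncomputable def gainCl {N q : ℕ} (dims : Fin N → ℕ) (C : Fin q → Finset (Fin N))
    (Zt Gt : Matrix (CIdx dims C) (CIdx dims C) ℝ) : Matrix (Idx dims) (Idx dims) ℝ :=
  ((Emat dims C)ᵀ * Emat dims C)⁻¹ * (Emat dims C)ᵀ * Zt * Gt⁻¹ * Emat dims C

/-- `Ψ(G̃, Q̃, Z̃) = [[G̃+G̃ᵀ−Q̃, (ÃG̃+B̃Z̃)ᵀ], [ÃG̃+B̃Z̃, Q̃]]`. -/
noncomputable def Psi {N q : ℕ} (dims : Fin N → ℕ) (C : Fin q → Finset (Fin N))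
    (A B : Matrix (Idx dims) (Idx dims) ℝ)
    (Gt Qt Zt : Matrix (CIdx dims C) (CIdx dims C) ℝ) :
    Matrix (CIdx dims C ⊕ CIdx dims C) (CIdx dims C ⊕ CIdx dims C) ℝ :=
  fromBlocks (Gt + Gtᵀ - Qt) (tilde dims C A * Gt + tilde dims C B * Zt)ᵀ
    (tilde dims C A * Gt + tilde dims C B * Zt) Qt


section AuxLemmas
set_option linter.unusedSectionVars false

variable {ι κ : Type*} [Fintype ι] [Fintype κ] [DecidableEq ι] [DecidableEq κ]

lemma psd_smul {c : ℝ} {A : Matrix ι ι ℝ} (hA : A.PosSemidef) (hc : 0 ≤ c) :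
    (c • A).PosSemidef := by
  refine .of_dotProduct_mulVec_nonneg ?_ fun x => ?_
  · unfold Matrix.IsHermitian
    rw [conjTranspose_smul]
    simp [← conjTranspose_eq_transpose_of_trivial, hA.1.eq]
  · rw [smul_mulVec, dotProduct_smul]
    have := hA.dotProduct_mulVec_nonneg x
    simpa using mul_nonneg hc (by simpa using this)

lemma psd_fromBlocks {A : Matrix ι ι ℝ} {D : Matrix κ κ ℝ}
    (hA : A.PosSemidef) (hD : D.PosSemidef) :
    (fromBlocks A 0 0 D).PosSemidef := by
  refine .of_dotProduct_mulVec_nonneg ?_ fun x => ?_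
  · unfold Matrix.IsHermitian
    rw [fromBlocks_conjTranspose]
    simp [hA.1.eq, hD.1.eq]
    exact ⟨by simpa using hA.1.eq, by simpa using hD.1.eq⟩
  · have h1 := hA.dotProduct_mulVec_nonneg (x ∘ Sum.inl)
    have h2 := hD.dotProduct_mulVec_nonneg (x ∘ Sum.inr)
    rw [star_trivial] at h1 h2 ⊢
    rw [← Sum.elim_comp_inl_inr x, fromBlocks_mulVec, sumElim_dotProduct_sumElim]
    simp only [zero_mulVec, add_zero, zero_add, Sum.elim_comp_inl, Sum.elim_comp_inr]
    linarith

lemma dot_shift (M : Matrix ι κ ℝ) (v : ι → ℝ) (w : κ → ℝ) :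
    v ⬝ᵥ (M *ᵥ w) = (Mᵀ *ᵥ v) ⬝ᵥ w := by
  rw [dotProduct_mulVec]
  congr 1
  rw [← vecMul_transpose, transpose_transpose]

lemma proj_dot {P : Matrix ι ι ℝ} (hs : Pᵀ = P) (hi : P * P = P) (v w : ι → ℝ) :
    v ⬝ᵥ (P *ᵥ w) = (P *ᵥ v) ⬝ᵥ (P *ᵥ w) := by
  conv_lhs => rw [← hi, ← mulVec_mulVec, dot_shift, hs]

end AuxLemmas

section Esec
set_option linter.unusedSectionVars false
variable {N q : ℕ} (dims : Fin N → ℕ) (C : Fin q → Finset (Fin N))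

lemma mulVec_Emat (x : Idx dims → ℝ) (c : CIdx dims C) :
    (Emat dims C *ᵥ x) c = x ⟨c.2.1.1, c.2.2⟩ := by
  simp [Matrix.mulVec, Emat, dotProduct]

lemma EtE_posDef (hcov : ∀ i : Fin N, ∃ k, i ∈ C k) :
    ((Emat dims C)ᵀ * Emat dims C).PosDef := by
  have psd : ((Emat dims C)ᵀ * Emat dims C).PosSemidef := by
    rw [← conjTranspose_eq_transpose_of_trivial]
    exact posSemidef_conjTranspose_mul_self _
  refine .of_dotProduct_mulVec_pos psd.1 fun x hx => lt_of_le_of_ne (psd.dotProduct_mulVec_nonneg x) (Ne.symm ?_)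
  intro h0
  have key : (star x) ⬝ᵥ (((Emat dims C)ᵀ * Emat dims C) *ᵥ x)
      = (Emat dims C *ᵥ x) ⬝ᵥ (Emat dims C *ᵥ x) := by
    rw [star_trivial, ← mulVec_mulVec, dot_shift, transpose_transpose]
  rw [key, dotProduct_self_eq_zero] at h0
  apply hx
  funext p
  obtain ⟨i, a⟩ := p
  obtain ⟨k, hk⟩ := hcov i
  have := congrFun h0 ⟨k, ⟨i, hk⟩, a⟩
  rwa [mulVec_Emat] at this

lemma EtE_det (hcov : ∀ i : Fin N, ∃ k, i ∈ C k) :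
    IsUnit ((Emat dims C)ᵀ * Emat dims C).det :=
  (EtE_posDef dims C hcov).det_pos.ne'.isUnit

lemma N0_transpose : (N0 dims C)ᵀ = N0 dims C := by
  unfold N0
  rw [transpose_sub, transpose_one]
  congr 1
  rw [transpose_mul, transpose_mul, transpose_transpose, transpose_nonsing_inv,
    transpose_mul, transpose_transpose, Matrix.mul_assoc]

lemma N0_idem (hcov : ∀ i : Fin N, ∃ k, i ∈ C k) :
    N0 dims C * N0 dims C = N0 dims C := by
  have hdet := EtE_det dims C hcov
  unfold N0
  have hPP : (Emat dims C * ((Emat dims C)ᵀ * Emat dims C)⁻¹ * (Emat dims C)ᵀ) *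
      (Emat dims C * ((Emat dims C)ᵀ * Emat dims C)⁻¹ * (Emat dims C)ᵀ)
      = Emat dims C * ((Emat dims C)ᵀ * Emat dims C)⁻¹ * (Emat dims C)ᵀ := by
    simp only [Matrix.mul_assoc]
    rw [← Matrix.mul_assoc ((Emat dims C)ᵀ) (Emat dims C) _,
      nonsing_inv_mul_cancel_left _ _ hdet]
  rw [Matrix.sub_mul, Matrix.mul_sub, Matrix.mul_sub, hPP]
  simp

lemma N0_psd (hcov : ∀ i : Fin N, ∃ k, i ∈ C k) : (N0 dims C).PosSemidef := by
  have h : N0 dims C = (N0 dims C)ᴴ * N0 dims C := by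
    rw [conjTranspose_eq_transpose_of_trivial, N0_transpose, N0_idem dims C hcov]
  rw [h]
  exact posSemidef_conjTranspose_mul_self _

end Esec

/-- Theorem 1, part 1: `𝒦_{𝒮,ext} ⊆ 𝒦̂_{𝒮,ext}`. -/
theorem stmt9 {N q : ℕ} (Gr : SimpleGraph (Fin N)) (dims : Fin N → ℕ)
    (C : Fin q → Finset (Fin N)) (hclq : IsCliques Gr C) (hass : Assumption1 Gr C)
    (A B : Matrix (Idx dims) (Idx dims) ℝ)
    (Zt Gt Qt : Matrix (CIdx dims C) (CIdx dims C) ℝ)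
    (hZt : CliqueBlkDiag dims C Zt) (hGt : CliqueBlkDiag dims C Gt) (hQpd : Qt.PosDef)
    (ρ η : ℝ) (hη : 0 < η)
    (h1 : (Psi dims C A B Gt Qt Zt + ρ • Mmat dims C).PosDef)
    (h2 : (Gtᵀ * N0 dims C + N0 dims C * Gt - η • N0 dims C).PosSemidef) :
    IsUnit Gt ∧
    (∃ μ : ℝ, (Psi dims C A B Gt Qt Zt +
        μ • ((fromBlocks Gt 0 0 Gt)ᵀ * Mmat dims C * (fromBlocks Gt 0 0 Gt))).PosDef) ∧
    ∃ (Zt' Gt' Qt' : Matrix (CIdx dims C) (CIdx dims C) ℝ) (ρ' : ℝ),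
      CliqueBlkDiag dims C Zt' ∧ CliqueBlkDiag dims C Gt' ∧ IsUnit Gt' ∧ Qt'.PosDef ∧
      (Psi dims C A B Gt' Qt' Zt' +
        ρ' • ((fromBlocks Gt' 0 0 Gt')ᵀ * Mmat dims C * (fromBlocks Gt' 0 0 Gt'))).PosDef ∧
      gainCl dims C Zt Gt = gainCl dims C Zt' Gt' := by
  classical
  have hcov := hass.1
  have hn0t : (N0 dims C)ᵀ = N0 dims C := N0_transpose dims C
  have hn0i : N0 dims C * N0 dims C = N0 dims C := N0_idem dims C hcov
  have hn0psd : (N0 dims C).PosSemidef := N0_psd dims C hcov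
  -- the two key block matrices
  have hblock : Psi dims C A B Gt Qt Zt + ρ • Mmat dims C =
      fromBlocks (Gt + Gtᵀ - Qt + ρ • N0 dims C)
        (tilde dims C A * Gt + tilde dims C B * Zt)ᵀ
        (tilde dims C A * Gt + tilde dims C B * Zt) (Qt + ρ • N0 dims C) := by
    unfold Psi Mmat
    rw [fromBlocks_smul, fromBlocks_add]
    simp
  -- quadratic form of h1 in the first block
  have hq1 : ∀ x : CIdx dims C → ℝ, x ≠ 0 →
      0 < x ⬝ᵥ ((Gt + Gtᵀ - Qt + ρ • N0 dims C) *ᵥ x) := by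
    intro x hx
    have hxe : (Sum.elim x (0 : CIdx dims C → ℝ)) ≠ 0 := by
      intro h
      apply hx
      funext i
      exact congrFun h (Sum.inl i)
    have h := h1.dotProduct_mulVec_pos hxe
    rw [star_trivial, hblock, fromBlocks_mulVec, sumElim_dotProduct_sumElim] at h
    simpa using h
  -- Gt is invertible
  have hGtinj : ∀ x : CIdx dims C → ℝ, Gt *ᵥ x = 0 → x = 0 := by
    intro x hGx
    by_contra hx
    have hn0x : 0 ≤ x ⬝ᵥ (N0 dims C *ᵥ x) := by
      have := hn0psd.dotProduct_mulVec_nonneg x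
      rwa [star_trivial] at this
    have h2x := h2.dotProduct_mulVec_nonneg x
    rw [star_trivial] at h2x
    have t1 : x ⬝ᵥ (Gtᵀ *ᵥ (N0 dims C *ᵥ x)) = 0 := by
      rw [dot_shift, transpose_transpose, hGx, zero_dotProduct]
    have t2 : x ⬝ᵥ (N0 dims C *ᵥ (Gt *ᵥ x)) = 0 := by
      rw [hGx, mulVec_zero, dotProduct_zero]
    have e1 : x ⬝ᵥ ((Gtᵀ * N0 dims C + N0 dims C * Gt - η • N0 dims C) *ᵥ x)
        = -(η * (x ⬝ᵥ (N0 dims C *ᵥ x))) := by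
      simp only [sub_mulVec, add_mulVec, dotProduct_sub, dotProduct_add, ← mulVec_mulVec,
        smul_mulVec, dotProduct_smul, smul_eq_mul, t1, t2]
      ring
    rw [e1] at h2x
    have hq0 : x ⬝ᵥ (N0 dims C *ᵥ x) = 0 := by nlinarith
    have hgx1 : x ⬝ᵥ (Gt *ᵥ x) = 0 := by rw [hGx, dotProduct_zero]
    have hgx2 : x ⬝ᵥ (Gtᵀ *ᵥ x) = 0 := by
      rw [dot_shift, transpose_transpose, hGx, zero_dotProduct]
    have hqQ : 0 < x ⬝ᵥ (Qt *ᵥ x) := by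
      have := hQpd.dotProduct_mulVec_pos hx
      rwa [star_trivial] at this
    have hgoal := hq1 x hx
    have e3 : x ⬝ᵥ ((Gt + Gtᵀ - Qt + ρ • N0 dims C) *ᵥ x)
        = x ⬝ᵥ (Gt *ᵥ x) + x ⬝ᵥ (Gtᵀ *ᵥ x) - x ⬝ᵥ (Qt *ᵥ x)
          + ρ * (x ⬝ᵥ (N0 dims C *ᵥ x)) := by
      simp only [add_mulVec, sub_mulVec, dotProduct_add, dotProduct_sub, smul_mulVec,
        dotProduct_smul, smul_eq_mul]
    rw [e3, hgx1, hgx2, hq0] at hgoal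
    linarith
  have hGtunit : IsUnit Gt := by
    rw [← Matrix.mulVec_injective_iff_isUnit]
    intro x y hxy
    have h0 : Gt *ᵥ (x - y) = 0 := by
      rw [mulVec_sub, hxy, sub_self]
    exact sub_eq_zero.mp (hGtinj _ h0)
  -- key semidefinite inequality  Gtᵀ N₀ Gt ⪰ (η²/4) N₀
  have hcpos : (0:ℝ) < η ^ 2 / 4 := by positivity
  have hkey : (Gtᵀ * N0 dims C * Gt - (η ^ 2 / 4) • N0 dims C).PosSemidef := by
    refine .of_dotProduct_mulVec_nonneg ?_ ?_
    · unfold Matrix.IsHermitian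
      rw [conjTranspose_eq_transpose_of_trivial, transpose_sub, transpose_smul, hn0t,
        transpose_mul, transpose_mul, transpose_transpose, hn0t, Matrix.mul_assoc]
    · intro x
      rw [star_trivial]
      have h2x := h2.dotProduct_mulVec_nonneg x
      rw [star_trivial] at h2x
      have t1 : x ⬝ᵥ (Gtᵀ *ᵥ (N0 dims C *ᵥ x))
          = (N0 dims C *ᵥ (Gt *ᵥ x)) ⬝ᵥ (N0 dims C *ᵥ x) := by
        rw [dot_shift, transpose_transpose, proj_dot hn0t hn0i (Gt *ᵥ x) x]
      have t2 : x ⬝ᵥ (N0 dims C *ᵥ (Gt *ᵥ x))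
          = (N0 dims C *ᵥ x) ⬝ᵥ (N0 dims C *ᵥ (Gt *ᵥ x)) :=
        proj_dot hn0t hn0i x (Gt *ᵥ x)
      have haa : x ⬝ᵥ (N0 dims C *ᵥ x) = (N0 dims C *ᵥ x) ⬝ᵥ (N0 dims C *ᵥ x) :=
        proj_dot hn0t hn0i x x
      have tbb : x ⬝ᵥ (Gtᵀ *ᵥ (N0 dims C *ᵥ (Gt *ᵥ x)))
          = (N0 dims C *ᵥ (Gt *ᵥ x)) ⬝ᵥ (N0 dims C *ᵥ (Gt *ᵥ x)) := by
        rw [dot_shift, transpose_transpose, proj_dot hn0t hn0i (Gt *ᵥ x) (Gt *ᵥ x)]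
      set a := N0 dims C *ᵥ x with ha
      set b := N0 dims C *ᵥ (Gt *ᵥ x) with hb
      have e2 : x ⬝ᵥ ((Gtᵀ * N0 dims C + N0 dims C * Gt - η • N0 dims C) *ᵥ x)
          = b ⬝ᵥ a + a ⬝ᵥ b - η * (a ⬝ᵥ a) := by
        simp only [sub_mulVec, add_mulVec, dotProduct_sub, dotProduct_add, ← mulVec_mulVec,
          smul_mulVec, dotProduct_smul, smul_eq_mul, ← ha, ← hb, t1, t2, haa]
      rw [e2, dotProduct_comm b a] at h2x
      have h2big : 0 ≤ 2 * (a ⬝ᵥ b) - η * (a ⬝ᵥ a) := by linarith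
      have egoal : x ⬝ᵥ ((Gtᵀ * N0 dims C * Gt - (η ^ 2 / 4) • N0 dims C) *ᵥ x)
          = b ⬝ᵥ b - (η ^ 2 / 4) * (a ⬝ᵥ a) := by
        simp only [sub_mulVec, dotProduct_sub, ← mulVec_mulVec, smul_mulVec,
          dotProduct_smul, smul_eq_mul, ← ha, ← hb, tbb, haa]
      rw [egoal]
      have haa0 : 0 ≤ a ⬝ᵥ a := Finset.sum_nonneg fun i _ => mul_self_nonneg (a i)
      have hbb0 : 0 ≤ b ⬝ᵥ b := Finset.sum_nonneg fun i _ => mul_self_nonneg (b i)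
      have cs : (a ⬝ᵥ b) ^ 2 ≤ (a ⬝ᵥ a) * (b ⬝ᵥ b) := by
        have h := Finset.sum_mul_sq_le_sq_mul_sq Finset.univ a b
        simpa [dotProduct, pow_two] using h
      rcases eq_or_lt_of_le haa0 with h0 | hpos
      · have : a = 0 := dotProduct_self_eq_zero.mp h0.symm
        rw [← h0]
        simpa using hbb0
      · have hab0 : 0 ≤ a ⬝ᵥ b := by nlinarith [mul_nonneg hη.le haa0]
        have hprod : 0 ≤ (2 * (a ⬝ᵥ b) - η * (a ⬝ᵥ a)) * (2 * (a ⬝ᵥ b) + η * (a ⬝ᵥ a)) :=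
          mul_nonneg h2big (by nlinarith [mul_nonneg hη.le haa0])
        nlinarith [cs, hprod, hpos]
  -- assemble
  have hHtMH : (fromBlocks Gt 0 0 Gt)ᵀ * Mmat dims C * fromBlocks Gt 0 0 Gt
      = fromBlocks (Gtᵀ * N0 dims C * Gt) 0 0 (Gtᵀ * N0 dims C * Gt) := by
    unfold Mmat
    rw [fromBlocks_transpose, fromBlocks_multiply, fromBlocks_multiply]
    simp
  have hMpsd : (Mmat dims C).PosSemidef := by
    unfold Mmat
    exact psd_fromBlocks hn0psd hn0psd
  have hdiff : ((fromBlocks Gt 0 0 Gt)ᵀ * Mmat dims C * fromBlocks Gt 0 0 Gt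
      - (η ^ 2 / 4) • Mmat dims C).PosSemidef := by
    rw [hHtMH]
    unfold Mmat
    rw [fromBlocks_smul, sub_eq_add_neg, fromBlocks_neg, fromBlocks_add]
    have := psd_fromBlocks hkey hkey
    simpa [sub_eq_add_neg] using this
  set μ : ℝ := max ρ 0 / (η ^ 2 / 4) with hμdef
  have hμ0 : 0 ≤ μ := div_nonneg (le_max_right ρ 0) hcpos.le
  have hμc : μ * (η ^ 2 / 4) = max ρ 0 := div_mul_cancel₀ _ hcpos.ne'
  have hfinal : (Psi dims C A B Gt Qt Zt +
      μ • ((fromBlocks Gt 0 0 Gt)ᵀ * Mmat dims C * fromBlocks Gt 0 0 Gt)).PosDef := by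
    have hid : Psi dims C A B Gt Qt Zt +
        μ • ((fromBlocks Gt 0 0 Gt)ᵀ * Mmat dims C * fromBlocks Gt 0 0 Gt)
        = (Psi dims C A B Gt Qt Zt + ρ • Mmat dims C) +
          (μ • ((fromBlocks Gt 0 0 Gt)ᵀ * Mmat dims C * fromBlocks Gt 0 0 Gt
              - (η ^ 2 / 4) • Mmat dims C) +
            (μ * (η ^ 2 / 4) - ρ) • Mmat dims C) := by
      module
    rw [hid]
    refine h1.add_posSemidef ((psd_smul hdiff hμ0).add (psd_smul hMpsd ?_))
    rw [hμc]
    simp [sub_nonneg, le_max_left]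
  exact ⟨hGtunit, ⟨μ, hfinal⟩, Zt, Gt, Qt, μ, hZt, hGt, hGtunit, hQpd, hfinal, rfl⟩
end

section
/- (Lemma BRL, equivalence of statements 2 and 3; extended bounded-real LMI) Let A ∈ ℝ^{n×n}, B_v ∈ ℝ^{n×m}, C ∈ ℝ^{l×n}, D_w ∈ ℝ^{l×m} and γ > 0. Then there exists P ≻ 0 such that the symmetric 4×4 block matrix [[−P⁻¹, A, B_v, 0], [Aᵀ, −P, 0, Cᵀ], [B_vᵀ, 0, −γI_m, D_wᵀ], [0, C, D_w, −γI_l]] ≺ 0 if and only if there exist P ≻ 0 and G ∈ ℝ^{n×n} such that [[−P, AG, B_v, 0], [GᵀAᵀ, P−G−Gᵀ, 0, GᵀCᵀ], [B_vᵀ, 0, −γI_m, D_wᵀ], [0, CG, D_w, −γI_l]] ≺ 0. -/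
open Matrix

set_option linter.unusedSectionVars false
set_option linter.unusedVariables false

section helpers
variable {k k' : Type*} [Fintype k] [Fintype k'] [DecidableEq k] [DecidableEq k']

lemma real_herm_trans {M : Matrix k k ℝ} (h : M.IsHermitian) : Mᵀ = M := by
  ext i j
  simpa [conjTranspose_apply] using congrFun (congrFun h.eq i) j

lemma conjT_eq_trans (M : Matrix k k' ℝ) : Mᴴ = Mᵀ := by
  ext i j; simp [conjTranspose_apply]

lemma posdef_conj {M T : Matrix k k ℝ} (hM : M.PosDef) (hT : IsUnit T) :
    (Tᵀ * M * T).PosDef := by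
  rw [posDef_iff_dotProduct_mulVec]
  constructor
  · have h := isHermitian_conjTranspose_mul_mul T hM.1
    rwa [conjT_eq_trans] at h
  · intro x hx
    have hTx : T *ᵥ x ≠ 0 := (Matrix.mulVec_injective_iff_isUnit.mpr hT).ne_iff' (by simp) |>.2 hx
    have := hM.dotProduct_mulVec_pos hTx
    have key : x ⬝ᵥ (Tᵀ * M * T) *ᵥ x = (T *ᵥ x) ⬝ᵥ M *ᵥ (T *ᵥ x) := by
      rw [← mulVec_mulVec, ← mulVec_mulVec, dotProduct_mulVec, vecMul_transpose]
    rw [star_trivial, key]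
    simpa [star_trivial] using this

lemma posdef_block₁₁ {A : Matrix k k ℝ} {B : Matrix k k' ℝ} {C : Matrix k' k ℝ}
    {D : Matrix k' k' ℝ} (h : (fromBlocks A B C D).PosDef) : A.PosDef := by
  rw [posDef_iff_dotProduct_mulVec]
  constructor
  · show Aᴴ = A
    ext i j
    simpa [conjTranspose_apply] using congrFun (congrFun h.1.eq (Sum.inl i)) (Sum.inl j)
  · intro x hx
    have hx' : (Sum.elim x 0 : k ⊕ k' → ℝ) ≠ 0 := by
      intro hc
      exact hx (funext fun i => congrFun hc (Sum.inl i))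
    have := h.dotProduct_mulVec_pos hx'
    simpa [star_trivial, fromBlocks_mulVec, sumElim_dotProduct_sumElim] using this

lemma posdef_block₂₂ {A : Matrix k k ℝ} {B : Matrix k k' ℝ} {C : Matrix k' k ℝ}
    {D : Matrix k' k' ℝ} (h : (fromBlocks A B C D).PosDef) : D.PosDef := by
  rw [posDef_iff_dotProduct_mulVec]
  constructor
  · show Dᴴ = D
    ext i j
    simpa [conjTranspose_apply] using congrFun (congrFun h.1.eq (Sum.inr i)) (Sum.inr j)
  · intro x hx
    have hx' : (Sum.elim 0 x : k ⊕ k' → ℝ) ≠ 0 := by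
      intro hc
      exact hx (funext fun i => congrFun hc (Sum.inr i))
    have := h.dotProduct_mulVec_pos hx'
    simpa [star_trivial, fromBlocks_mulVec, sumElim_dotProduct_sumElim] using this

lemma possemidef_pad₂₂ {D : Matrix k' k' ℝ} (hD : D.PosSemidef) :
    (fromBlocks (0 : Matrix k k ℝ) 0 0 D).PosSemidef := by
  rw [posSemidef_iff_dotProduct_mulVec]
  constructor
  · have : (fromBlocks (0 : Matrix k k ℝ) 0 0 D)ᴴ = fromBlocks (0 : Matrix k k ℝ) 0 0 Dᴴ := by
      simp [fromBlocks_conjTranspose, fromBlocks_transpose]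
    rw [Matrix.IsHermitian, this, hD.1.eq]
  · intro x
    have hx : x = Sum.elim (x ∘ Sum.inl) (x ∘ Sum.inr) := (Sum.elim_comp_inl_inr x).symm
    have := hD.dotProduct_mulVec_nonneg (x ∘ Sum.inr)
    rw [star_trivial, hx]
    simp only [fromBlocks_mulVec, Matrix.zero_mulVec, add_zero, zero_add,
      sumElim_dotProduct_sumElim, dotProduct_zero, zero_add]
    simpa using this

lemma possemidef_pad₁₁ {A : Matrix k k ℝ} (hA : A.PosSemidef) :
    (fromBlocks A 0 0 (0 : Matrix k' k' ℝ)).PosSemidef := by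
  rw [posSemidef_iff_dotProduct_mulVec]
  constructor
  · have : (fromBlocks A 0 0 (0 : Matrix k' k' ℝ))ᴴ = fromBlocks Aᴴ 0 0 (0 : Matrix k' k' ℝ) := by
      simp [fromBlocks_conjTranspose, fromBlocks_transpose]
    rw [Matrix.IsHermitian, this, hA.1.eq]
  · intro x
    have hx : x = Sum.elim (x ∘ Sum.inl) (x ∘ Sum.inr) := (Sum.elim_comp_inl_inr x).symm
    have := hA.dotProduct_mulVec_nonneg (x ∘ Sum.inl)
    rw [star_trivial, hx]
    simp only [fromBlocks_mulVec, Matrix.zero_mulVec, add_zero, zero_add,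
      sumElim_dotProduct_sumElim, dotProduct_zero, add_zero]
    simpa using this

end helpers


lemma negdef_conj {k : Type*} [Fintype k] [DecidableEq k] {M T : Matrix k k ℝ}
    (hM : NegDef M) (hT : IsUnit T) : NegDef (Tᵀ * M * T) := by
  have h : -(Tᵀ * M * T) = Tᵀ * (-M) * T := by
    simp [Matrix.mul_neg, Matrix.neg_mul]
  unfold NegDef
  rw [h]
  exact posdef_conj hM hT

lemma negdef_block₁₁ {k k' : Type*} [Fintype k] [Fintype k'] [DecidableEq k] [DecidableEq k']
    {A : Matrix k k ℝ} {B : Matrix k k' ℝ} {C : Matrix k' k ℝ}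
    {D : Matrix k' k' ℝ} (h : NegDef (fromBlocks A B C D)) : NegDef A := by
  unfold NegDef at *
  rw [fromBlocks_neg] at h
  exact posdef_block₁₁ h

lemma negdef_block₂₂ {k k' : Type*} [Fintype k] [Fintype k'] [DecidableEq k] [DecidableEq k']
    {A : Matrix k k ℝ} {B : Matrix k k' ℝ} {C : Matrix k' k ℝ}
    {D : Matrix k' k' ℝ} (h : NegDef (fromBlocks A B C D)) : NegDef D := by
  unfold NegDef at *
  rw [fromBlocks_neg] at h
  exact posdef_block₂₂ h

lemma block_diag_isUnit {k k' : Type*} [Fintype k] [Fintype k'] [DecidableEq k] [DecidableEq k']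
    {G H : Matrix k k ℝ} (h1 : G * H = 1) (h2 : H * G = 1) :
    IsUnit (fromBlocks (fromBlocks (1 : Matrix k k ℝ) 0 0 G) 0 0 (1 : Matrix k' k' ℝ)) := by
  refine ⟨⟨fromBlocks (fromBlocks (1 : Matrix k k ℝ) 0 0 G) 0 0 (1 : Matrix k' k' ℝ),
      fromBlocks (fromBlocks (1 : Matrix k k ℝ) 0 0 H) 0 0 (1 : Matrix k' k' ℝ), ?_, ?_⟩, rfl⟩
  · simp only [fromBlocks_multiply, Matrix.mul_zero, Matrix.zero_mul, add_zero, zero_add,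
      Matrix.mul_one, Matrix.one_mul, h1]
    rw [fromBlocks_one, fromBlocks_one]
  · simp only [fromBlocks_multiply, Matrix.mul_zero, Matrix.zero_mul, add_zero, zero_add,
      Matrix.mul_one, Matrix.one_mul, h2]
    rw [fromBlocks_one, fromBlocks_one]

/-- Bounded real lemma, equivalence of statements 2 and 3 (extended bounded-real LMI). -/
theorem stmt14 {n m l : ℕ} (A : Matrix (Fin n) (Fin n) ℝ) (Bv : Matrix (Fin n) (Fin m) ℝ)
    (C : Matrix (Fin l) (Fin n) ℝ) (Dw : Matrix (Fin l) (Fin m) ℝ) (γ : ℝ) (hγ : 0 < γ) :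
    (∃ P : Matrix (Fin n) (Fin n) ℝ, P.PosDef ∧
      NegDef (fromBlocks
        (fromBlocks (-(P⁻¹)) A Aᵀ (-P))
        (fromBlocks Bv 0 0 Cᵀ)
        (fromBlocks Bvᵀ 0 0 C)
        (fromBlocks (-(γ • (1 : Matrix (Fin m) (Fin m) ℝ))) Dwᵀ Dw
          (-(γ • (1 : Matrix (Fin l) (Fin l) ℝ)))))) ↔
    (∃ P G : Matrix (Fin n) (Fin n) ℝ, P.PosDef ∧
      NegDef (fromBlocks
        (fromBlocks (-P) (A * G) (Gᵀ * Aᵀ) (P - G - Gᵀ))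
        (fromBlocks Bv 0 0 (Gᵀ * Cᵀ))
        (fromBlocks Bvᵀ 0 0 (C * G))
        (fromBlocks (-(γ • (1 : Matrix (Fin m) (Fin m) ℝ))) Dwᵀ Dw
          (-(γ • (1 : Matrix (Fin l) (Fin l) ℝ)))))) := by
  set R : Matrix (Fin m ⊕ Fin l) (Fin m ⊕ Fin l) ℝ :=
    fromBlocks (-(γ • (1 : Matrix (Fin m) (Fin m) ℝ))) Dwᵀ Dw
      (-(γ • (1 : Matrix (Fin l) (Fin l) ℝ))) with hR
  constructor
  · rintro ⟨P, hP, hM⟩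
    have hdP : IsUnit P.det := (Matrix.isUnit_iff_isUnit_det P).mp hP.isUnit
    have hPT : Pᵀ = P := real_herm_trans hP.1
    have hPiT : (P⁻¹)ᵀ = P⁻¹ := by rw [Matrix.transpose_nonsing_inv, hPT]
    have hPP1 : P * P⁻¹ = 1 := Matrix.mul_nonsing_inv P hdP
    have hP1P : P⁻¹ * P = 1 := Matrix.nonsing_inv_mul P hdP
    refine ⟨P⁻¹, P⁻¹, hP.inv, ?_⟩
    set T : Matrix ((Fin n ⊕ Fin n) ⊕ (Fin m ⊕ Fin l)) ((Fin n ⊕ Fin n) ⊕ (Fin m ⊕ Fin l)) ℝ :=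
      fromBlocks (fromBlocks 1 0 0 P⁻¹) 0 0 1 with hT
    have hTu : IsUnit T := block_diag_isUnit hP1P hPP1
    have hN := negdef_conj hM hTu
    have hEq : Tᵀ * (fromBlocks
        (fromBlocks (-(P⁻¹)) A Aᵀ (-P))
        (fromBlocks Bv 0 0 Cᵀ)
        (fromBlocks Bvᵀ 0 0 C) R) * T =
      fromBlocks
        (fromBlocks (-(P⁻¹)) (A * P⁻¹) ((P⁻¹)ᵀ * Aᵀ) (P⁻¹ - P⁻¹ - (P⁻¹)ᵀ))
        (fromBlocks Bv 0 0 ((P⁻¹)ᵀ * Cᵀ))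
        (fromBlocks Bvᵀ 0 0 (C * P⁻¹)) R := by
      rw [hT]
      simp only [fromBlocks_transpose, transpose_one, transpose_zero, hPiT,
        fromBlocks_multiply, Matrix.mul_zero, Matrix.zero_mul, add_zero, zero_add,
        Matrix.mul_one, Matrix.one_mul, Matrix.mul_neg, Matrix.neg_mul, sub_self, zero_sub,
        neg_zero]
      rw [hP1P, Matrix.one_mul]
    rw [hEq] at hN
    exact hN
  · rintro ⟨P, G, hP, hM⟩
    have hdP : IsUnit P.det := (Matrix.isUnit_iff_isUnit_det P).mp hP.isUnit
    have hPT : Pᵀ = P := real_herm_trans hP.1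
    have hPiT : (P⁻¹)ᵀ = P⁻¹ := by rw [Matrix.transpose_nonsing_inv, hPT]
    have hPP1 : P * P⁻¹ = 1 := Matrix.mul_nonsing_inv P hdP
    have hP1P : P⁻¹ * P = 1 := Matrix.nonsing_inv_mul P hdP
    -- the (2,2) block of the (1,1) block is negative definite
    have h22 : NegDef (P - G - Gᵀ) := negdef_block₂₂ (negdef_block₁₁ hM)
    have hGG : (G + Gᵀ - P).PosDef := by
      have : -(P - G - Gᵀ) = G + Gᵀ - P := by abel
      rw [NegDef, this] at h22
      exact h22
    have hGGP : (G + Gᵀ).PosDef := by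
      have h' := hGG.add_posSemidef hP.posSemidef
      simpa using h'
    have hGinj : Function.Injective G.mulVec := by
      intro a b hab
      by_contra hne
      have hx : a - b ≠ 0 := sub_ne_zero.mpr hne
      have h0 : G *ᵥ (a - b) = 0 := by rw [Matrix.mulVec_sub, hab, sub_self]
      have hpos := hGGP.dotProduct_mulVec_pos hx
      rw [star_trivial, Matrix.add_mulVec, dotProduct_add, h0, dotProduct_zero,
        zero_add, Matrix.mulVec_transpose, dotProduct_comm,
        ← Matrix.dotProduct_mulVec, h0, dotProduct_zero] at hpos
      exact lt_irrefl 0 hpos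
    have hGu : IsUnit G := Matrix.mulVec_injective_iff_isUnit.mp hGinj
    have hdG : IsUnit G.det := (Matrix.isUnit_iff_isUnit_det G).mp hGu
    have hGG1 : G * G⁻¹ = 1 := Matrix.mul_nonsing_inv G hdG
    have hG1G : G⁻¹ * G = 1 := Matrix.nonsing_inv_mul G hdG
    set S : Matrix (Fin n) (Fin n) ℝ := (G⁻¹)ᵀ * (P - G - Gᵀ) * G⁻¹ with hS
    set T : Matrix ((Fin n ⊕ Fin n) ⊕ (Fin m ⊕ Fin l)) ((Fin n ⊕ Fin n) ⊕ (Fin m ⊕ Fin l)) ℝ :=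
      fromBlocks (fromBlocks 1 0 0 G⁻¹) 0 0 1 with hT
    have hTu : IsUnit T := block_diag_isUnit hG1G hGG1
    have hN := negdef_conj hM hTu
    have hEq : Tᵀ * (fromBlocks
        (fromBlocks (-P) (A * G) (Gᵀ * Aᵀ) (P - G - Gᵀ))
        (fromBlocks Bv 0 0 (Gᵀ * Cᵀ))
        (fromBlocks Bvᵀ 0 0 (C * G)) R) * T =
      fromBlocks
        (fromBlocks (-P) A Aᵀ S)
        (fromBlocks Bv 0 0 Cᵀ)
        (fromBlocks Bvᵀ 0 0 C) R := by
      rw [hT, hS]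
      have hGiT : (G⁻¹)ᵀ * Gᵀ = 1 := by rw [← Matrix.transpose_mul, hGG1, transpose_one]
      simp only [fromBlocks_transpose, transpose_one, transpose_zero,
        fromBlocks_multiply, Matrix.mul_zero, Matrix.zero_mul, add_zero, zero_add,
        Matrix.mul_one, Matrix.one_mul, neg_zero, Matrix.mul_assoc, hGG1, hG1G]
      rw [← Matrix.mul_assoc ((G⁻¹)ᵀ) Gᵀ Aᵀ, hGiT, Matrix.one_mul,
        ← Matrix.mul_assoc ((G⁻¹)ᵀ) Gᵀ Cᵀ, hGiT, Matrix.one_mul]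
    rw [hEq] at hN
    refine ⟨P⁻¹, hP.inv, ?_⟩
    have hPinvinv : (P⁻¹)⁻¹ = P := Matrix.nonsing_inv_nonsing_inv P hdP
    have hGiT : (G⁻¹)ᵀ * Gᵀ = 1 := by rw [← Matrix.transpose_mul, hGG1, transpose_one]
    have key : S + P⁻¹ = (G⁻¹ - P⁻¹)ᵀ * P * (G⁻¹ - P⁻¹) := by
      rw [hS]
      simp only [transpose_sub, hPiT, Matrix.sub_mul, Matrix.mul_sub, Matrix.mul_assoc]
      rw [hGG1, hPP1, Matrix.mul_one, ← Matrix.mul_assoc P⁻¹ P G⁻¹, hP1P,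
        ← Matrix.mul_assoc (G⁻¹)ᵀ Gᵀ G⁻¹, hGiT, Matrix.one_mul, Matrix.mul_one]
      abel
    have hK : (S + P⁻¹).PosSemidef := by
      rw [key, ← conjT_eq_trans]
      exact hP.posSemidef.conjTranspose_mul_mul_same _
    have hE : (fromBlocks (fromBlocks (0 : Matrix (Fin n) (Fin n) ℝ) 0 0 (S + P⁻¹))
        (0 : Matrix (Fin n ⊕ Fin n) (Fin m ⊕ Fin l) ℝ) 0 0).PosSemidef :=
      possemidef_pad₁₁ (possemidef_pad₂₂ hK)
    have hfinal : -(fromBlocks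
        (fromBlocks (-((P⁻¹)⁻¹)) A Aᵀ (-(P⁻¹)))
        (fromBlocks Bv 0 0 Cᵀ)
        (fromBlocks Bvᵀ 0 0 C) R) =
      -(fromBlocks
        (fromBlocks (-P) A Aᵀ S)
        (fromBlocks Bv 0 0 Cᵀ)
        (fromBlocks Bvᵀ 0 0 C) R) +
      fromBlocks (fromBlocks (0 : Matrix (Fin n) (Fin n) ℝ) 0 0 (S + P⁻¹))
        (0 : Matrix (Fin n ⊕ Fin n) (Fin m ⊕ Fin l) ℝ) 0 0 := by
      rw [hPinvinv]
      simp only [fromBlocks_neg, fromBlocks_add, add_zero, neg_neg, zero_add]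
      rw [show -S + (S + P⁻¹) = P⁻¹ by abel]
    show (-(fromBlocks
        (fromBlocks (-((P⁻¹)⁻¹)) A Aᵀ (-(P⁻¹)))
        (fromBlocks Bv 0 0 Cᵀ)
        (fromBlocks Bvᵀ 0 0 C) R)).PosDef
    rw [hfinal]
    exact hN.add_posSemidef hE
end

section
/- (Lemma 9) Under Assumption 1, every element of 𝒦̂_{𝒮,ext}^{∞,γ} belongs to 𝒦_all^{∞,γ}: if Z̃ and G̃ are clique-block-diagonal, Q̃ ≻ 0, and there exists ρ ∈ ℝ with Θ_γ(G̃,Q̃,Z̃) + blkdiag(ρG̃ᵀN₀G̃, ρG̃ᵀN₀G̃, 0_{m_v}, 0_l) ≺ 0, then G̃ is invertible, K = (EᵀE)⁻¹Eᵀ Z̃ G̃⁻¹ E satisfies K ∈ 𝒮, and there exists P ≻ 0 such that [[−P⁻¹, A+BK, B_v, 0], [(A+BK)ᵀ, −P, 0, (C+DK)ᵀ], [B_vᵀ, 0, −γI_{m_v}, D_wᵀ], [0, C+DK, D_w, −γI_l]] ≺ 0. -/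
open Matrix

/-- `Θ_γ(G̃, Q̃, Z̃)`. -/
noncomputable def Theta {N q mv l : ℕ} (dims : Fin N → ℕ) (C : Fin q → Finset (Fin N))
    (A B : Matrix (Idx dims) (Idx dims) ℝ) (Bv : Matrix (Idx dims) (Fin mv) ℝ)
    (Cm Dm : Matrix (Fin l) (Idx dims) ℝ) (Dw : Matrix (Fin l) (Fin mv) ℝ) (γ : ℝ)
    (Gt Qt Zt : Matrix (CIdx dims C) (CIdx dims C) ℝ) :
    Matrix ((CIdx dims C ⊕ CIdx dims C) ⊕ (Fin mv ⊕ Fin l))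
      ((CIdx dims C ⊕ CIdx dims C) ⊕ (Fin mv ⊕ Fin l)) ℝ :=
  fromBlocks
    (fromBlocks (-Qt) (tilde dims C A * Gt + tilde dims C B * Zt)
      (tilde dims C A * Gt + tilde dims C B * Zt)ᵀ (Qt - Gt - Gtᵀ))
    (fromBlocks (Emat dims C * Bv) 0 0
      (Cm * ((Emat dims C)ᵀ * Emat dims C)⁻¹ * (Emat dims C)ᵀ * Gt
        + Dm * ((Emat dims C)ᵀ * Emat dims C)⁻¹ * (Emat dims C)ᵀ * Zt)ᵀ)
    (fromBlocks (Emat dims C * Bv)ᵀ 0 0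
      (Cm * ((Emat dims C)ᵀ * Emat dims C)⁻¹ * (Emat dims C)ᵀ * Gt
        + Dm * ((Emat dims C)ᵀ * Emat dims C)⁻¹ * (Emat dims C)ᵀ * Zt))
    (fromBlocks (-(γ • (1 : Matrix (Fin mv) (Fin mv) ℝ))) Dwᵀ Dw
      (-(γ • (1 : Matrix (Fin l) (Fin l) ℝ))))

/-- The closed-loop bounded-real LMI matrix
`[[−P⁻¹, A+BK, B_v, 0], [(A+BK)ᵀ, −P, 0, (C+DK)ᵀ], [B_vᵀ, 0, −γI, D_wᵀ], [0, C+DK, D_w, −γI]]`. -/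
noncomputable def BRLclosed {N mv l : ℕ} (dims : Fin N → ℕ)
    (A B : Matrix (Idx dims) (Idx dims) ℝ) (Bv : Matrix (Idx dims) (Fin mv) ℝ)
    (Cm Dm : Matrix (Fin l) (Idx dims) ℝ) (Dw : Matrix (Fin l) (Fin mv) ℝ) (γ : ℝ)
    (K P : Matrix (Idx dims) (Idx dims) ℝ) :
    Matrix ((Idx dims ⊕ Idx dims) ⊕ (Fin mv ⊕ Fin l))
      ((Idx dims ⊕ Idx dims) ⊕ (Fin mv ⊕ Fin l)) ℝ :=
  fromBlocks
    (fromBlocks (-(P⁻¹)) (A + B * K) (A + B * K)ᵀ (-P))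
    (fromBlocks Bv 0 0 (Cm + Dm * K)ᵀ)
    (fromBlocks Bvᵀ 0 0 (Cm + Dm * K))
    (fromBlocks (-(γ • (1 : Matrix (Fin mv) (Fin mv) ℝ))) Dwᵀ Dw
      (-(γ • (1 : Matrix (Fin l) (Fin l) ℝ))))

/-- `blkdiag(X, X, 0_{m_v}, 0_l)`. -/
def Pert {N q : ℕ} (dims : Fin N → ℕ) (C : Fin q → Finset (Fin N)) (mv l : ℕ)
    (X : Matrix (CIdx dims C) (CIdx dims C) ℝ) :
    Matrix ((CIdx dims C ⊕ CIdx dims C) ⊕ (Fin mv ⊕ Fin l))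
      ((CIdx dims C ⊕ CIdx dims C) ⊕ (Fin mv ⊕ Fin l)) ℝ :=
  fromBlocks (fromBlocks X 0 0 X) 0 0 0

section Aux

variable {N q : ℕ} {dims : Fin N → ℕ} {C : Fin q → Finset (Fin N)}

private def eproj (s : CIdx dims C) : Idx dims := ⟨s.2.1.1, s.2.2⟩

private lemma Emat_apply (s : CIdx dims C) (i : Idx dims) :
    Emat dims C s i = if eproj s = i then 1 else 0 := rfl

private lemma fiber_card (p : Idx dims) :
    (Finset.univ.filter fun s : CIdx dims C => eproj s = p).card
      = (Finset.univ.filter fun k => p.1 ∈ C k).card := by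
  apply Finset.card_bij (fun s _ => s.1)
  · rintro ⟨k, ⟨j, hj⟩, a⟩ hs
    simp only [Finset.mem_filter, Finset.mem_univ, true_and] at hs ⊢
    cases hs
    exact hj
  · rintro ⟨k, ⟨j, hj⟩, a⟩ hs ⟨k', ⟨j', hj'⟩, a'⟩ hs' hkk
    simp only [Finset.mem_filter, Finset.mem_univ, true_and] at hs hs'
    cases hkk
    cases hs' 
    obtain ⟨h1, h2⟩ := Sigma.mk.inj_iff.mp hs
    cases h1
    cases eq_of_heq h2
    rfl
  · intro k hk
    simp only [Finset.mem_filter, Finset.mem_univ, true_and] at hk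
    exact ⟨⟨k, ⟨p.1, hk⟩, p.2⟩, Finset.mem_filter.mpr ⟨Finset.mem_univ _, rfl⟩, rfl⟩

private lemma EtE_eq :
    (Emat dims C)ᵀ * Emat dims C =
      Matrix.diagonal (fun p : Idx dims =>
        ((Finset.univ.filter fun k => p.1 ∈ C k).card : ℝ)) := by
  ext p r
  rw [mul_apply]
  simp only [transpose_apply, Emat_apply]
  by_cases hpr : p = r
  · subst hpr
    rw [diagonal_apply_eq, ← fiber_card p, ← Finset.sum_boole]
    apply Finset.sum_congr rfl
    intro s _
    by_cases h : eproj s = p <;> simp [h]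
  · rw [diagonal_apply_ne _ hpr]
    apply Finset.sum_eq_zero
    intro s _
    by_cases h : eproj s = p
    · have : eproj s ≠ r := by rw [h]; exact hpr
      simp [h, this, hpr]
    · simp [h]

private lemma cliqueCard_pos (h1 : ∀ i, ∃ k, i ∈ C k) (p : Idx dims) :
    0 < (Finset.univ.filter fun k => p.1 ∈ C k).card := by
  obtain ⟨k, hk⟩ := h1 p.1
  exact Finset.card_pos.mpr ⟨k, by simp [hk]⟩

private lemma EtE_isUnit (h1 : ∀ i, ∃ k, i ∈ C k) :
    IsUnit ((Emat dims C)ᵀ * Emat dims C) := by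
  rw [Matrix.isUnit_iff_isUnit_det, EtE_eq, det_diagonal, isUnit_iff_ne_zero]
  exact Finset.prod_ne_zero_iff.mpr fun p _ =>
    Nat.cast_ne_zero.mpr (cliqueCard_pos h1 p).ne'

private lemma EtE_inv_eq (h1 : ∀ i, ∃ k, i ∈ C k) :
    ((Emat dims C)ᵀ * Emat dims C)⁻¹ =
      Matrix.diagonal (fun p : Idx dims =>
        ((Finset.univ.filter fun k => p.1 ∈ C k).card : ℝ)⁻¹) := by
  apply Matrix.inv_eq_left_inv
  rw [EtE_eq, diagonal_mul_diagonal]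
  rw [show (fun p : Idx dims =>
      ((Finset.univ.filter fun k => p.1 ∈ C k).card : ℝ)⁻¹ *
        ((Finset.univ.filter fun k => p.1 ∈ C k).card : ℝ)) = fun _ => 1 from ?_,
    diagonal_one]
  funext p
  exact inv_mul_cancel₀ (Nat.cast_ne_zero.mpr (cliqueCard_pos h1 p).ne')

end Aux

section Helpers
variable {n m p r : Type*} [Fintype n] [Fintype m] [Fintype p] [Fintype r]

private lemma mulc_one [DecidableEq n] {A B : Matrix n n ℝ} (h : A * B = 1)
    (X : Matrix n m ℝ) : A * (B * X) = X := by
  rw [← Matrix.mul_assoc, h, Matrix.one_mul]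

private lemma mulc_zero {A : Matrix n p ℝ} {B : Matrix p r ℝ} (h : A * B = 0)
    (X : Matrix r m ℝ) : A * (B * X) = (0 : Matrix n m ℝ) := by
  rw [← Matrix.mul_assoc, h, Matrix.zero_mul]

private lemma isHermitian_of_symm {M : Matrix n n ℝ} (h : Mᵀ = M) : M.IsHermitian := by
  rw [Matrix.IsHermitian, conjTranspose_eq_transpose_of_trivial, h]

private lemma symm_of_isHermitian {M : Matrix n n ℝ} (h : M.IsHermitian) : Mᵀ = M := by
  rw [← conjTranspose_eq_transpose_of_trivial]; exact h

private lemma dot_shift_s19 (A : Matrix n m ℝ) (x : n → ℝ) (y : m → ℝ) :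
    x ⬝ᵥ (A *ᵥ y) = (Aᵀ *ᵥ x) ⬝ᵥ y := by
  rw [dotProduct_mulVec, ← vecMul_transpose, transpose_transpose]

private lemma posDef_conjT {M : Matrix n n ℝ} (hM : M.PosDef)
    (R : Matrix n m ℝ) (hR : ∀ x, R *ᵥ x = 0 → x = 0) : (Rᵀ * M * R).PosDef := by
  refine Matrix.PosDef.of_dotProduct_mulVec_pos ?_ ?_
  · apply isHermitian_of_symm
    rw [Matrix.transpose_mul, Matrix.transpose_mul, transpose_transpose,
      symm_of_isHermitian hM.1, Matrix.mul_assoc]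
  · intro x hx
    have hRx : R *ᵥ x ≠ 0 := fun hc => hx (hR x hc)
    have := hM.dotProduct_mulVec_pos hRx
    simpa [star_trivial, ← Matrix.mulVec_mulVec, dot_shift_s19] using this

private lemma psd_conjT {M : Matrix n n ℝ} (hM : M.PosSemidef)
    (R : Matrix n m ℝ) : (Rᵀ * M * R).PosSemidef := by
  have := hM.conjTranspose_mul_mul_same R
  rwa [conjTranspose_eq_transpose_of_trivial] at this

private lemma psd_mul_mul_transpose {M : Matrix n n ℝ} (hM : M.PosSemidef)
    (R : Matrix m n ℝ) : (R * M * Rᵀ).PosSemidef := by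
  have := hM.mul_mul_conjTranspose_same R
  rwa [conjTranspose_eq_transpose_of_trivial] at this

private lemma psd_fromBlocks_diag {A : Matrix n n ℝ} {D : Matrix m m ℝ}
    (hA : A.PosSemidef) (hD : D.PosSemidef) :
    (Matrix.fromBlocks A 0 0 D).PosSemidef := by
  refine Matrix.PosSemidef.of_dotProduct_mulVec_nonneg ?_ ?_
  · apply isHermitian_of_symm
    rw [fromBlocks_transpose, transpose_zero, transpose_zero,
      symm_of_isHermitian hA.1, symm_of_isHermitian hD.1]
  · intro x
    rw [← Sum.elim_comp_inl_inr x, fromBlocks_mulVec]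
    simp only [star_trivial, Matrix.zero_mulVec, add_zero, zero_add,
      sumElim_dotProduct_sumElim]
    have h1 := hA.dotProduct_mulVec_nonneg (x ∘ Sum.inl)
    have h2 := hD.dotProduct_mulVec_nonneg (x ∘ Sum.inr)
    simp only [star_trivial] at h1 h2
    exact add_nonneg h1 h2

private lemma psd_inv_sub_inv [DecidableEq n] {A B : Matrix n n ℝ}
    (hA : A.PosDef) (hB : B.PosDef) (hBA : (B - A).PosSemidef) :
    (A⁻¹ - B⁻¹).PosSemidef := by
  refine Matrix.PosSemidef.of_dotProduct_mulVec_nonneg ?_ ?_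
  · exact (isHermitian_of_symm (by
      rw [transpose_sub, transpose_nonsing_inv, transpose_nonsing_inv,
        symm_of_isHermitian hA.1, symm_of_isHermitian hB.1]))
  · intro x
    rw [star_trivial, sub_mulVec, dotProduct_sub]
    set y := B⁻¹ *ᵥ x with hy
    have hBdet : IsUnit B.det := (Matrix.isUnit_iff_isUnit_det _).mp hB.isUnit
    have hAdet : IsUnit A.det := (Matrix.isUnit_iff_isUnit_det _).mp hA.isUnit
    have hBy : B *ᵥ y = x := by
      rw [hy, Matrix.mulVec_mulVec, Matrix.mul_nonsing_inv _ hBdet, Matrix.one_mulVec]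
    have e1 : x ⬝ᵥ (B⁻¹ *ᵥ x) = x ⬝ᵥ y := rfl
    -- y⬝Ay ≤ y⬝By
    have h2 : y ⬝ᵥ (A *ᵥ y) ≤ y ⬝ᵥ (B *ᵥ y) := by
      have := hBA.dotProduct_mulVec_nonneg y
      rw [star_trivial, sub_mulVec, dotProduct_sub] at this
      linarith
    set z := A⁻¹ *ᵥ x - y with hz
    have hAAi : A * A⁻¹ = 1 := Matrix.mul_nonsing_inv _ hAdet
    have hAz : A *ᵥ z = x - A *ᵥ y := by
      rw [hz, Matrix.mulVec_sub, Matrix.mulVec_mulVec, hAAi, Matrix.one_mulVec]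
    have hAsymm : Aᵀ = A := symm_of_isHermitian hA.1
    have e2 : (A⁻¹ *ᵥ x) ⬝ᵥ (A *ᵥ y) = x ⬝ᵥ y := by
      rw [dot_shift_s19, Matrix.mulVec_mulVec, hAsymm, hAAi, Matrix.one_mulVec]
    have e3 : z ⬝ᵥ (A *ᵥ z) = x ⬝ᵥ (A⁻¹ *ᵥ x) - 2 * (x ⬝ᵥ y) + y ⬝ᵥ (A *ᵥ y) := by
      rw [hAz, hz, sub_dotProduct, dotProduct_sub, dotProduct_sub, e2,
        dotProduct_comm (A⁻¹ *ᵥ x) x, dotProduct_comm y x]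
      ring
    have e4 : y ⬝ᵥ (B *ᵥ y) = x ⬝ᵥ y := by rw [hBy, dotProduct_comm]
    have h3 := hA.posSemidef.dotProduct_mulVec_nonneg z
    rw [star_trivial, e3] at h3
    linarith
private lemma gap_identity [DecidableEq n] {H S : Matrix n n ℝ} (hS : Sᵀ = S)
    (hSi : S * S⁻¹ = 1) (hSi' : S⁻¹ * S = 1) :
    H * (S⁻¹ * Hᵀ) - (H + Hᵀ - S) = (H - S) * S⁻¹ * (H - S)ᵀ := by
  have c1 : ∀ X : Matrix n n ℝ, S * (S⁻¹ * X) = X := fun X => mulc_one hSi X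
  simp only [Matrix.sub_mul, Matrix.mul_sub, transpose_sub, hS, Matrix.mul_assoc, c1, hSi',
    Matrix.mul_one]
  abel

private lemma inv_eq_helper [DecidableEq n] {H S : Matrix n n ℝ} (hH : H * H⁻¹ = 1)
    (hHi : H⁻¹ * H = 1) (hSi : S * S⁻¹ = 1) :
    ((H⁻¹)ᵀ * S * H⁻¹)⁻¹ = H * (S⁻¹ * Hᵀ) := by
  apply Matrix.inv_eq_right_inv
  have c2 : ∀ X : Matrix n n ℝ, H⁻¹ * (H * X) = X := fun X => mulc_one hHi X
  have c3 : ∀ X : Matrix n n ℝ, S * (S⁻¹ * X) = X := fun X => mulc_one hSi X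
  simp only [Matrix.mul_assoc, c2, c3]
  rw [← Matrix.transpose_mul, hH, transpose_one]

end Helpers

section CBD
variable {N q : ℕ} {dims : Fin N → ℕ} {C : Fin q → Finset (Fin N)}

private lemma cbd_mul {X Y : Matrix (CIdx dims C) (CIdx dims C) ℝ}
    (hX : CliqueBlkDiag dims C X) (hY : CliqueBlkDiag dims C Y) :
    CliqueBlkDiag dims C (X * Y) := by
  intro p r hpr
  rw [mul_apply]
  apply Finset.sum_eq_zero
  intro s _
  by_cases h : s.1 = p.1
  · rw [hY s r (h ▸ hpr), mul_zero]
  · rw [hX p s (fun hc => h hc.symm), zero_mul]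

private def kproj (k : Fin q) : Matrix (CIdx dims C) (CIdx dims C) ℝ :=
  Matrix.diagonal (fun s => if s.1 = k then 1 else 0)

private lemma cbd_comm {X : Matrix (CIdx dims C) (CIdx dims C) ℝ}
    (hX : CliqueBlkDiag dims C X) (k : Fin q) :
    kproj k * X = X * kproj k := by
  ext p r
  rw [kproj, diagonal_mul, mul_diagonal]
  by_cases hpr : p.1 = r.1
  · rw [hpr, mul_comm]
  · rw [hX p r hpr, mul_zero, zero_mul]

private lemma cbd_inv {X : Matrix (CIdx dims C) (CIdx dims C) ℝ}
    (hX : CliqueBlkDiag dims C X) (hu : IsUnit X) :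
    CliqueBlkDiag dims C X⁻¹ := by
  have hdet : IsUnit X.det := (Matrix.isUnit_iff_isUnit_det _).mp hu
  have hXXi : X * X⁻¹ = 1 := Matrix.mul_nonsing_inv _ hdet
  have hXiX : X⁻¹ * X = 1 := Matrix.nonsing_inv_mul _ hdet
  have hcomm : ∀ k, X⁻¹ * kproj k = kproj k * X⁻¹ := by
    intro k
    calc X⁻¹ * kproj k = X⁻¹ * kproj k * (X * X⁻¹) := by rw [hXXi, Matrix.mul_one]
      _ = X⁻¹ * (kproj k * X) * X⁻¹ := by
          rw [← Matrix.mul_assoc (X⁻¹ * kproj k) X X⁻¹, Matrix.mul_assoc X⁻¹ (kproj k) X]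
      _ = X⁻¹ * (X * kproj k) * X⁻¹ := by rw [cbd_comm hX k]
      _ = kproj k * X⁻¹ := by
          rw [← Matrix.mul_assoc, Matrix.mul_assoc X⁻¹ X, ← Matrix.mul_assoc X⁻¹ X, hXiX,
            Matrix.one_mul]
  intro p r hpr
  have h1 : (X⁻¹ * (kproj r.1 : Matrix (CIdx dims C) (CIdx dims C) ℝ)) p r = X⁻¹ p r := by
    rw [kproj, mul_diagonal]; simp
  have h2 : ((kproj r.1 : Matrix (CIdx dims C) (CIdx dims C) ℝ) * X⁻¹) p r = 0 := by
    rw [kproj, diagonal_mul]; simp [hpr]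
  rw [← h1, hcomm, h2]

private lemma sparse_aux {Gr : SimpleGraph (Fin N)}
    (hadj : ∀ i j : Fin N, i ≠ j → (∃ k, i ∈ C k ∧ j ∈ C k) → Gr.Adj i j)
    {M : Matrix (CIdx dims C) (CIdx dims C) ℝ} (hM : CliqueBlkDiag dims C M)
    (D : Matrix (Idx dims) (Idx dims) ℝ) (hD : ∀ p r : Idx dims, p ≠ r → D p r = 0) :
    Sparse Gr dims (D * ((Emat dims C)ᵀ * M * Emat dims C)) := by
  intro i j hij hnadj a b
  rw [mul_apply]
  apply Finset.sum_eq_zero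
  intro x _
  by_cases hx : x = (⟨i, a⟩ : Idx dims)
  · subst hx
    have : ((Emat dims C)ᵀ * M * Emat dims C) (⟨i, a⟩ : Idx dims) (⟨j, b⟩ : Idx dims) = 0 := by
      rw [Matrix.mul_assoc, mul_apply]
      apply Finset.sum_eq_zero
      intro s _
      rw [mul_apply]
      rw [Finset.mul_sum]
      apply Finset.sum_eq_zero
      intro t _
      rw [transpose_apply, Emat_apply, Emat_apply]
      by_cases hs : eproj s = (⟨i, a⟩ : Idx dims)
      · by_cases ht : eproj t = (⟨j, b⟩ : Idx dims)
        · have hst : s.1 ≠ t.1 := by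
            intro hc
            apply hnadj
            apply hadj i j hij
            refine ⟨s.1, ?_, ?_⟩
            · have := s.2.1.2
              have hs1 : s.2.1.1 = i := congrArg Sigma.fst hs
              rwa [hs1] at this
            · have := t.2.1.2
              have ht1 : t.2.1.1 = j := congrArg Sigma.fst ht
              rw [ht1] at this
              rwa [← hc] at this
          rw [hM s t hst]
          simp
        · simp [ht]
      · simp [hs]
    rw [this, mul_zero]
  · rw [hD _ _ (fun hc => hx hc.symm), zero_mul]

end CBD

set_option maxHeartbeats 2000000 in
/-- Lemma 9: every element of `𝒦̂_{𝒮,ext}^{∞,γ}` belongs to `𝒦_all^{∞,γ}`. -/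
theorem stmt19 {N q mv l : ℕ} (Gr : SimpleGraph (Fin N)) (dims : Fin N → ℕ)
    (C : Fin q → Finset (Fin N)) (hclq : IsCliques Gr C) (hass : Assumption1 Gr C)
    (A B : Matrix (Idx dims) (Idx dims) ℝ) (Bv : Matrix (Idx dims) (Fin mv) ℝ)
    (Cm Dm : Matrix (Fin l) (Idx dims) ℝ) (Dw : Matrix (Fin l) (Fin mv) ℝ)
    (γ : ℝ) (hγ : 0 < γ)
    (Zt Gt Qt : Matrix (CIdx dims C) (CIdx dims C) ℝ)
    (hZt : CliqueBlkDiag dims C Zt) (hGt : CliqueBlkDiag dims C Gt) (hQpd : Qt.PosDef)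
    (ρ : ℝ)
    (h : NegDef (Theta dims C A B Bv Cm Dm Dw γ Gt Qt Zt +
        Pert dims C mv l (ρ • (Gtᵀ * N0 dims C * Gt)))) :
    IsUnit Gt ∧ Sparse Gr dims (gainCl dims C Zt Gt) ∧
    ∃ P : Matrix (Idx dims) (Idx dims) ℝ, P.PosDef ∧
      NegDef (BRLclosed dims A B Bv Cm Dm Dw γ (gainCl dims C Zt Gt) P) := by

  classical
  obtain ⟨h1cov, hadj⟩ := hass
  have hTu : IsUnit ((Emat dims C)ᵀ * Emat dims C) := EtE_isUnit h1cov
  have hTdet : IsUnit ((Emat dims C)ᵀ * Emat dims C).det :=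
    (Matrix.isUnit_iff_isUnit_det _).mp hTu
  have hTiT : ((Emat dims C)ᵀ * Emat dims C)⁻¹ * ((Emat dims C)ᵀ * Emat dims C) = 1 :=
    Matrix.nonsing_inv_mul _ hTdet
  have hTTi : ((Emat dims C)ᵀ * Emat dims C) * ((Emat dims C)ᵀ * Emat dims C)⁻¹ = 1 :=
    Matrix.mul_nonsing_inv _ hTdet
  have hTsymm : (((Emat dims C)ᵀ * Emat dims C)⁻¹)ᵀ = ((Emat dims C)ᵀ * Emat dims C)⁻¹ := by
    rw [Matrix.transpose_nonsing_inv, Matrix.transpose_mul, transpose_transpose]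
  have hN0F : N0 dims C * Emat dims C = 0 := by
    rw [N0, Matrix.sub_mul, Matrix.one_mul,
      Matrix.mul_assoc (Emat dims C * ((Emat dims C)ᵀ * Emat dims C)⁻¹),
      Matrix.mul_assoc (Emat dims C), hTiT, Matrix.mul_one, sub_self]
  have hFinj : ∀ x : Idx dims → ℝ, Emat dims C *ᵥ x = 0 → x = 0 := by
    intro x hx
    have e := congrArg (fun v => ((Emat dims C)ᵀ * Emat dims C)⁻¹ *ᵥ ((Emat dims C)ᵀ *ᵥ v)) hx
    simp only [Matrix.mulVec_mulVec, Matrix.mulVec_zero] at e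
    rw [hTiT, Matrix.one_mulVec] at e
    exact e
  -- the quadratic form of the (2,2) block of Θ + Pert is negative definite
  have hquad : ∀ ξ : CIdx dims C → ℝ, ξ ≠ 0 →
      ξ ⬝ᵥ ((Qt - Gt - Gtᵀ + ρ • (Gtᵀ * N0 dims C * Gt)) *ᵥ ξ) < 0 := by
    intro ξ hξ
    have hx0 : (Sum.elim (Sum.elim (0 : CIdx dims C → ℝ) ξ)
        (0 : Fin mv ⊕ Fin l → ℝ)) ≠ 0 := by
      intro hc
      apply hξ
      funext s
      exact congrFun hc (Sum.inl (Sum.inr s))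
    have hval := h.dotProduct_mulVec_pos hx0
    rw [star_trivial] at hval
    have hcomp : (Sum.elim (Sum.elim (0 : CIdx dims C → ℝ) ξ) (0 : Fin mv ⊕ Fin l → ℝ)) ⬝ᵥ
        ((-(Theta dims C A B Bv Cm Dm Dw γ Gt Qt Zt +
          Pert dims C mv l (ρ • (Gtᵀ * N0 dims C * Gt)))) *ᵥ
          (Sum.elim (Sum.elim (0 : CIdx dims C → ℝ) ξ) (0 : Fin mv ⊕ Fin l → ℝ)))
        = -(ξ ⬝ᵥ ((Qt - Gt - Gtᵀ + ρ • (Gtᵀ * N0 dims C * Gt)) *ᵥ ξ)) := by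
      have hz : (0 : Fin mv ⊕ Fin l → ℝ) = Sum.elim (0 : Fin mv → ℝ) (0 : Fin l → ℝ) := by
        funext s; cases s <;> rfl
      rw [hz]
      simp only [Theta, Pert, Matrix.neg_mulVec, Matrix.add_mulVec, Matrix.sub_mulVec,
        Matrix.fromBlocks_mulVec, Matrix.mulVec_zero, Matrix.zero_mulVec, add_zero, zero_add,
        Sum.elim_comp_inl, Sum.elim_comp_inr, dotProduct_neg, dotProduct_add,
        sumElim_dotProduct_sumElim, dotProduct_zero, zero_dotProduct]
    rw [hcomp] at hval
    linarith
  -- invertibility of G̃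
  have hGtu : IsUnit Gt := by
    by_contra hns
    have hdet0 : Gt.det = 0 := by
      by_contra hd
      exact hns ((Matrix.isUnit_iff_isUnit_det _).mpr (isUnit_iff_ne_zero.mpr hd))
    obtain ⟨v, hv0, hv⟩ := (Matrix.exists_mulVec_eq_zero_iff).mpr hdet0
    have hlt := hquad v hv0
    have hq : v ⬝ᵥ ((Qt - Gt - Gtᵀ + ρ • (Gtᵀ * N0 dims C * Gt)) *ᵥ v)
        = v ⬝ᵥ (Qt *ᵥ v) := by
      rw [Matrix.add_mulVec, Matrix.sub_mulVec, Matrix.sub_mulVec, dotProduct_add,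
        dotProduct_sub, dotProduct_sub, hv, dotProduct_zero,
        dot_shift_s19 Gtᵀ v v, transpose_transpose, hv, zero_dotProduct,
        smul_mulVec, ← Matrix.mulVec_mulVec, hv, Matrix.mulVec_zero, smul_zero,
        dotProduct_zero]
      ring
    have hQ := hQpd.dotProduct_mulVec_pos hv0
    rw [star_trivial] at hQ
    rw [hq] at hlt
    linarith
  have hGdet : IsUnit Gt.det := (Matrix.isUnit_iff_isUnit_det _).mp hGtu
  have hGGi : Gt * Gt⁻¹ = 1 := Matrix.mul_nonsing_inv _ hGdet
  have hGiG : Gt⁻¹ * Gt = 1 := Matrix.nonsing_inv_mul _ hGdet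
  -- invertibility of H = Eᵀ G̃⁻¹ E
  have hHu : IsUnit ((Emat dims C)ᵀ * Gt⁻¹ * Emat dims C) := by
    by_contra hns
    have hdet0 : ((Emat dims C)ᵀ * Gt⁻¹ * Emat dims C).det = 0 := by
      by_contra hd
      exact hns ((Matrix.isUnit_iff_isUnit_det _).mpr (isUnit_iff_ne_zero.mpr hd))
    obtain ⟨y, hy0, hy⟩ := (Matrix.exists_mulVec_eq_zero_iff).mpr hdet0
    have hGξ : Gt *ᵥ (Gt⁻¹ *ᵥ (Emat dims C *ᵥ y)) = Emat dims C *ᵥ y := by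
      rw [Matrix.mulVec_mulVec, hGGi, Matrix.one_mulVec]
    have hξ0 : (Gt⁻¹ *ᵥ (Emat dims C *ᵥ y)) ≠ 0 := by
      intro hc
      apply hy0
      apply hFinj
      rw [← hGξ, hc, Matrix.mulVec_zero]
    have hFtξ : (Emat dims C)ᵀ *ᵥ (Gt⁻¹ *ᵥ (Emat dims C *ᵥ y)) = 0 := by
      rw [Matrix.mulVec_mulVec, Matrix.mulVec_mulVec]
      exact hy
    have hlt := hquad _ hξ0
    have hq : (Gt⁻¹ *ᵥ (Emat dims C *ᵥ y)) ⬝ᵥ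
        ((Qt - Gt - Gtᵀ + ρ • (Gtᵀ * N0 dims C * Gt)) *ᵥ (Gt⁻¹ *ᵥ (Emat dims C *ᵥ y)))
        = (Gt⁻¹ *ᵥ (Emat dims C *ᵥ y)) ⬝ᵥ (Qt *ᵥ (Gt⁻¹ *ᵥ (Emat dims C *ᵥ y))) := by
      rw [Matrix.add_mulVec, Matrix.sub_mulVec, Matrix.sub_mulVec, dotProduct_add,
        dotProduct_sub, dotProduct_sub]
      rw [show (Gt⁻¹ *ᵥ (Emat dims C *ᵥ y)) ⬝ᵥ (Gt *ᵥ (Gt⁻¹ *ᵥ (Emat dims C *ᵥ y))) = 0 from by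
        rw [hGξ, dot_shift_s19, hFtξ, zero_dotProduct]]
      rw [show (Gt⁻¹ *ᵥ (Emat dims C *ᵥ y)) ⬝ᵥ (Gtᵀ *ᵥ (Gt⁻¹ *ᵥ (Emat dims C *ᵥ y))) = 0 from by
        rw [dot_shift_s19, transpose_transpose, hGξ, dotProduct_comm, dot_shift_s19, hFtξ,
          zero_dotProduct]]
      rw [smul_mulVec, ← Matrix.mulVec_mulVec, hGξ, ← Matrix.mulVec_mulVec,
        Matrix.mulVec_mulVec y (N0 dims C) (Emat dims C), hN0F, Matrix.zero_mulVec,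
        Matrix.mulVec_zero, smul_zero, dotProduct_zero]
      ring
    have hQ := hQpd.dotProduct_mulVec_pos hξ0
    rw [star_trivial] at hQ
    rw [hq] at hlt
    linarith
  have hHdet : IsUnit ((Emat dims C)ᵀ * Gt⁻¹ * Emat dims C).det := (Matrix.isUnit_iff_isUnit_det _).mp hHu
  have hHHi : ((Emat dims C)ᵀ * Gt⁻¹ * Emat dims C) * ((Emat dims C)ᵀ * Gt⁻¹ * Emat dims C)⁻¹ = 1 := Matrix.mul_nonsing_inv _ hHdet
  have hHiH : ((Emat dims C)ᵀ * Gt⁻¹ * Emat dims C)⁻¹ * ((Emat dims C)ᵀ * Gt⁻¹ * Emat dims C) = 1 := Matrix.nonsing_inv_mul _ hHdet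
  refine ⟨hGtu, ?_, ?_⟩
  · -- sparsity of the gain
    have hKform : gainCl dims C Zt Gt = ((Emat dims C)ᵀ * Emat dims C)⁻¹ *
        ((Emat dims C)ᵀ * (Zt * Gt⁻¹) * Emat dims C) := by
      rw [gainCl]
      simp only [Matrix.mul_assoc]
    rw [hKform]
    apply sparse_aux (fun i j hij he => (hadj i j hij).mp he)
      (cbd_mul hZt (cbd_inv hGt hGtu))
    intro p r hpr
    rw [EtE_inv_eq h1cov, diagonal_apply_ne _ hpr]
  · -- existence of P
    -- injectivity facts
    have hWinj : ∀ x : Idx dims → ℝ, (Gt⁻¹ * Emat dims C) *ᵥ x = 0 → x = 0 := by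
      intro x hx
      apply hFinj
      have : Gt *ᵥ ((Gt⁻¹ * Emat dims C) *ᵥ x) = Emat dims C *ᵥ x := by
        rw [Matrix.mulVec_mulVec, ← Matrix.mul_assoc, hGGi, Matrix.one_mul]
      rw [← this, hx, Matrix.mulVec_zero]
    have hR1inj : ∀ x : Idx dims → ℝ, (Gt⁻¹ * Emat dims C * ((Emat dims C)ᵀ * Gt⁻¹ * Emat dims C)⁻¹) *ᵥ x = 0 → x = 0 := by
      intro x hx
      have h1 : (Gt⁻¹ * Emat dims C) *ᵥ (((Emat dims C)ᵀ * Gt⁻¹ * Emat dims C)⁻¹ *ᵥ x) = 0 := by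
        rw [Matrix.mulVec_mulVec]
        exact hx
      have h2 := hWinj _ h1
      have := congrArg (fun v => ((Emat dims C)ᵀ * Gt⁻¹ * Emat dims C) *ᵥ v) h2
      simpa only [Matrix.mulVec_mulVec, hHHi, Matrix.one_mulVec, Matrix.mulVec_zero] using this
    -- cancellation rules
    have cGGi : ∀ (μ : Type) [Fintype μ] (X : Matrix (CIdx dims C) μ ℝ),
        Gt * (Gt⁻¹ * X) = X := fun μ _ X => mulc_one hGGi X
    have cGtT : ∀ (μ : Type) [Fintype μ] (X : Matrix (CIdx dims C) μ ℝ),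
        (Gt⁻¹)ᵀ * (Gtᵀ * X) = X := by
      intro μ _ X
      apply mulc_one
      rw [← Matrix.transpose_mul, hGGi, transpose_one]
    have cTiT1 : ∀ (μ : Type) [Fintype μ] (X : Matrix (Idx dims) μ ℝ),
        ((Emat dims C)ᵀ * Emat dims C)⁻¹ * ((Emat dims C)ᵀ * (Emat dims C * X)) = X := by
      intro μ _ X
      have e1 : (Emat dims C)ᵀ * (Emat dims C * X) = ((Emat dims C)ᵀ * Emat dims C) * X := (Matrix.mul_assoc _ _ _).symm
      rw [e1]
      exact mulc_one hTiT X
    have cTTi2 : ∀ (μ : Type) [Fintype μ] (X : Matrix (Idx dims) μ ℝ),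
        (Emat dims C)ᵀ * (Emat dims C * (((Emat dims C)ᵀ * Emat dims C)⁻¹ * X)) = X := by
      intro μ _ X
      have e1 : Emat dims C * (((Emat dims C)ᵀ * Emat dims C)⁻¹ * X) = (Emat dims C * ((Emat dims C)ᵀ * Emat dims C)⁻¹) * X := (Matrix.mul_assoc _ _ _).symm
      have e2 : (Emat dims C)ᵀ * ((Emat dims C * ((Emat dims C)ᵀ * Emat dims C)⁻¹) * X) = ((Emat dims C)ᵀ * (Emat dims C * ((Emat dims C)ᵀ * Emat dims C)⁻¹)) * X :=
        (Matrix.mul_assoc _ _ _).symm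
      have e3 : (Emat dims C)ᵀ * (Emat dims C * ((Emat dims C)ᵀ * Emat dims C)⁻¹) = (Emat dims C)ᵀ * Emat dims C * ((Emat dims C)ᵀ * Emat dims C)⁻¹ := (Matrix.mul_assoc _ _ _).symm
      rw [e1, e2, e3, hTTi, Matrix.one_mul]
    have cN0F1 : ∀ (μ : Type) [Fintype μ] (X : Matrix (Idx dims) μ ℝ),
        N0 dims C * (Emat dims C * X) = 0 := fun μ _ X => mulc_zero hN0F X
    have cHt1 : ∀ (μ : Type) [Fintype μ] (X : Matrix (Idx dims) μ ℝ),
        (((Emat dims C)ᵀ * (Gt⁻¹ * Emat dims C))⁻¹)ᵀ * ((Emat dims C)ᵀ * ((Gt⁻¹)ᵀ * (Emat dims C * X))) = X := by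
      intro μ _ X
      have hmeq : ((Emat dims C)ᵀ * (Gt⁻¹ * Emat dims C)) = ((Emat dims C)ᵀ * Gt⁻¹ * Emat dims C) := (Matrix.mul_assoc _ _ _).symm
      have e : (Emat dims C)ᵀ * ((Gt⁻¹)ᵀ * (Emat dims C * X)) = ((Emat dims C)ᵀ * Gt⁻¹ * Emat dims C)ᵀ * X := by
        rw [Matrix.transpose_mul, Matrix.transpose_mul, transpose_transpose,
          Matrix.mul_assoc, Matrix.mul_assoc]
      rw [hmeq, e, ← Matrix.mul_assoc, ← Matrix.transpose_mul, hHHi, transpose_one,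
        Matrix.one_mul]
    have cHf0 : (Emat dims C)ᵀ * (Gt⁻¹ * (Emat dims C * ((Emat dims C)ᵀ * (Gt⁻¹ * Emat dims C))⁻¹)) = 1 := by
      have hmeq : ((Emat dims C)ᵀ * (Gt⁻¹ * Emat dims C)) = ((Emat dims C)ᵀ * Gt⁻¹ * Emat dims C) := (Matrix.mul_assoc _ _ _).symm
      rw [hmeq]
      have e1 : Gt⁻¹ * (Emat dims C * ((Emat dims C)ᵀ * Gt⁻¹ * Emat dims C)⁻¹) = (Gt⁻¹ * Emat dims C) * ((Emat dims C)ᵀ * Gt⁻¹ * Emat dims C)⁻¹ := (Matrix.mul_assoc _ _ _).symm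
      have e2 : (Emat dims C)ᵀ * ((Gt⁻¹ * Emat dims C) * ((Emat dims C)ᵀ * Gt⁻¹ * Emat dims C)⁻¹) = ((Emat dims C)ᵀ * (Gt⁻¹ * Emat dims C)) * ((Emat dims C)ᵀ * Gt⁻¹ * Emat dims C)⁻¹ :=
        (Matrix.mul_assoc _ _ _).symm
      have e3 : (Emat dims C)ᵀ * (Gt⁻¹ * Emat dims C) = (Emat dims C)ᵀ * Gt⁻¹ * Emat dims C := (Matrix.mul_assoc _ _ _).symm
      rw [e1, e2, e3]
      exact hHHi
    -- positive definiteness of S and P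
    have hQsymm : Qtᵀ = Qt := symm_of_isHermitian hQpd.1
    have hSpd : ((Gt⁻¹ * Emat dims C)ᵀ * Qt * (Gt⁻¹ * Emat dims C)).PosDef := posDef_conjT hQpd (Gt⁻¹ * Emat dims C) hWinj
    have hSdet : IsUnit ((Gt⁻¹ * Emat dims C)ᵀ * Qt * (Gt⁻¹ * Emat dims C)).det := (Matrix.isUnit_iff_isUnit_det _).mp hSpd.isUnit
    have hSsymm : ((Gt⁻¹ * Emat dims C)ᵀ * Qt * (Gt⁻¹ * Emat dims C))ᵀ = ((Gt⁻¹ * Emat dims C)ᵀ * Qt * (Gt⁻¹ * Emat dims C)) := symm_of_isHermitian hSpd.1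
    have hWQW : (Gt⁻¹ * Emat dims C)ᵀ * (Qt - Gt - Gtᵀ + ρ • (Gtᵀ * N0 dims C * Gt)) * (Gt⁻¹ * Emat dims C)
        = -(((Emat dims C)ᵀ * Gt⁻¹ * Emat dims C) + ((Emat dims C)ᵀ * Gt⁻¹ * Emat dims C)ᵀ - ((Gt⁻¹ * Emat dims C)ᵀ * Qt * (Gt⁻¹ * Emat dims C))) := by
      simp only [Matrix.transpose_mul, transpose_transpose, Matrix.sub_mul, Matrix.mul_sub,
        Matrix.add_mul, Matrix.mul_add, Matrix.mul_smul, Matrix.smul_mul, Matrix.mul_assoc,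
        cGGi, cGtT, hN0F, cN0F1, Matrix.mul_zero, Matrix.zero_mul, smul_zero, add_zero,
        zero_add]
      abel
    have hPpd : (((Emat dims C)ᵀ * Gt⁻¹ * Emat dims C) + ((Emat dims C)ᵀ * Gt⁻¹ * Emat dims C)ᵀ - ((Gt⁻¹ * Emat dims C)ᵀ * Qt * (Gt⁻¹ * Emat dims C))).PosDef := by
      refine Matrix.PosDef.of_dotProduct_mulVec_pos ?_ ?_
      · apply isHermitian_of_symm
        rw [transpose_sub, transpose_add, transpose_transpose, hSsymm, add_comm]
      · intro x hx
        rw [star_trivial]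
        have hWx : (Gt⁻¹ * Emat dims C) *ᵥ x ≠ 0 := fun hc => hx (hWinj x hc)
        have hlt := hquad _ hWx
        have e : x ⬝ᵥ ((((Emat dims C)ᵀ * Gt⁻¹ * Emat dims C) + ((Emat dims C)ᵀ * Gt⁻¹ * Emat dims C)ᵀ - ((Gt⁻¹ * Emat dims C)ᵀ * Qt * (Gt⁻¹ * Emat dims C))) *ᵥ x)
            = -(((Gt⁻¹ * Emat dims C) *ᵥ x) ⬝ᵥ ((Qt - Gt - Gtᵀ + ρ • (Gtᵀ * N0 dims C * Gt)) *ᵥ ((Gt⁻¹ * Emat dims C) *ᵥ x))) := by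
          have e1 : x ⬝ᵥ ((((Emat dims C)ᵀ * Gt⁻¹ * Emat dims C) + ((Emat dims C)ᵀ * Gt⁻¹ * Emat dims C)ᵀ - ((Gt⁻¹ * Emat dims C)ᵀ * Qt * (Gt⁻¹ * Emat dims C))) *ᵥ x) = -(x ⬝ᵥ (((Gt⁻¹ * Emat dims C)ᵀ * (Qt - Gt - Gtᵀ + ρ • (Gtᵀ * N0 dims C * Gt)) * (Gt⁻¹ * Emat dims C)) *ᵥ x)) := by
            rw [hWQW, Matrix.neg_mulVec, dotProduct_neg, neg_neg]
          rw [e1, ← Matrix.mulVec_mulVec, ← Matrix.mulVec_mulVec, dot_shift_s19,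
            transpose_transpose]
        rw [e]
        linarith
    -- further inverse facts
    have hHiinj : ∀ x : Idx dims → ℝ, ((Emat dims C)ᵀ * Gt⁻¹ * Emat dims C)⁻¹ *ᵥ x = 0 → x = 0 := by
      intro x hx
      have e := congrArg (fun v => ((Emat dims C)ᵀ * Gt⁻¹ * Emat dims C) *ᵥ v) hx
      simpa only [Matrix.mulVec_mulVec, hHHi, Matrix.one_mulVec, Matrix.mulVec_zero] using e
    have hSiS : ((Gt⁻¹ * Emat dims C)ᵀ * Qt * (Gt⁻¹ * Emat dims C))⁻¹ * ((Gt⁻¹ * Emat dims C)ᵀ * Qt * (Gt⁻¹ * Emat dims C)) = 1 := Matrix.nonsing_inv_mul _ hSdet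
    have hSSi : ((Gt⁻¹ * Emat dims C)ᵀ * Qt * (Gt⁻¹ * Emat dims C)) * ((Gt⁻¹ * Emat dims C)ᵀ * Qt * (Gt⁻¹ * Emat dims C))⁻¹ = 1 := Matrix.mul_nonsing_inv _ hSdet
    have cHiH : ∀ (μ : Type) [Fintype μ] (X : Matrix (Idx dims) μ ℝ),
        ((Emat dims C)ᵀ * Gt⁻¹ * Emat dims C)⁻¹ * (((Emat dims C)ᵀ * Gt⁻¹ * Emat dims C) * X) = X := fun μ _ X => mulc_one hHiH X
    have cSSi : ∀ (μ : Type) [Fintype μ] (X : Matrix (Idx dims) μ ℝ),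
        ((Gt⁻¹ * Emat dims C)ᵀ * Qt * (Gt⁻¹ * Emat dims C)) * (((Gt⁻¹ * Emat dims C)ᵀ * Qt * (Gt⁻¹ * Emat dims C))⁻¹ * X) = X := fun μ _ X => mulc_one hSSi X
    have hCMpd : ((((Emat dims C)ᵀ * Gt⁻¹ * Emat dims C)⁻¹)ᵀ * ((Gt⁻¹ * Emat dims C)ᵀ * Qt * (Gt⁻¹ * Emat dims C)) * ((Emat dims C)ᵀ * Gt⁻¹ * Emat dims C)⁻¹).PosDef := posDef_conjT hSpd ((Emat dims C)ᵀ * Gt⁻¹ * Emat dims C)⁻¹ hHiinj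
    have hCMdet : IsUnit ((((Emat dims C)ᵀ * Gt⁻¹ * Emat dims C)⁻¹)ᵀ * ((Gt⁻¹ * Emat dims C)ᵀ * Qt * (Gt⁻¹ * Emat dims C)) * ((Emat dims C)ᵀ * Gt⁻¹ * Emat dims C)⁻¹).det := (Matrix.isUnit_iff_isUnit_det _).mp hCMpd.isUnit
    have hCMi_eq : ((((Emat dims C)ᵀ * Gt⁻¹ * Emat dims C)⁻¹)ᵀ * ((Gt⁻¹ * Emat dims C)ᵀ * Qt * (Gt⁻¹ * Emat dims C)) * ((Emat dims C)ᵀ * Gt⁻¹ * Emat dims C)⁻¹)⁻¹ = ((Emat dims C)ᵀ * Gt⁻¹ * Emat dims C) * (((Gt⁻¹ * Emat dims C)ᵀ * Qt * (Gt⁻¹ * Emat dims C))⁻¹ * ((Emat dims C)ᵀ * Gt⁻¹ * Emat dims C)ᵀ) :=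
      inv_eq_helper hHHi hHiH hSSi
    have hgap : (((((Emat dims C)ᵀ * Gt⁻¹ * Emat dims C)⁻¹)ᵀ * ((Gt⁻¹ * Emat dims C)ᵀ * Qt * (Gt⁻¹ * Emat dims C)) * ((Emat dims C)ᵀ * Gt⁻¹ * Emat dims C)⁻¹)⁻¹ - (((Emat dims C)ᵀ * Gt⁻¹ * Emat dims C) + ((Emat dims C)ᵀ * Gt⁻¹ * Emat dims C)ᵀ - ((Gt⁻¹ * Emat dims C)ᵀ * Qt * (Gt⁻¹ * Emat dims C)))).PosSemidef := by
      rw [hCMi_eq]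
      rw [gap_identity hSsymm hSSi hSiS]
      exact psd_mul_mul_transpose hSpd.inv.posSemidef (((Emat dims C)ᵀ * Gt⁻¹ * Emat dims C) - ((Gt⁻¹ * Emat dims C)ᵀ * Qt * (Gt⁻¹ * Emat dims C)))
    have hDpsd : ((((Emat dims C)ᵀ * Gt⁻¹ * Emat dims C) + ((Emat dims C)ᵀ * Gt⁻¹ * Emat dims C)ᵀ - ((Gt⁻¹ * Emat dims C)ᵀ * Qt * (Gt⁻¹ * Emat dims C)))⁻¹ - ((((Emat dims C)ᵀ * Gt⁻¹ * Emat dims C)⁻¹)ᵀ * ((Gt⁻¹ * Emat dims C)ᵀ * Qt * (Gt⁻¹ * Emat dims C)) * ((Emat dims C)ᵀ * Gt⁻¹ * Emat dims C)⁻¹)).PosSemidef := by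
      have e := psd_inv_sub_inv hPpd hCMpd.inv hgap
      rwa [Matrix.nonsing_inv_nonsing_inv _ hCMdet] at e
    -- conversion to fully right-associated normal forms
    have hHmN : ((Emat dims C)ᵀ * Gt⁻¹ * Emat dims C) = ((Emat dims C)ᵀ * (Gt⁻¹ * Emat dims C)) := Matrix.mul_assoc _ _ _
    have hHmTN : ((Emat dims C)ᵀ * Gt⁻¹ * Emat dims C)ᵀ = ((Emat dims C)ᵀ * ((Gt⁻¹)ᵀ * Emat dims C)) := by
      rw [Matrix.transpose_mul, Matrix.transpose_mul, transpose_transpose]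
    have hSmN : ((Gt⁻¹ * Emat dims C)ᵀ * Qt * (Gt⁻¹ * Emat dims C)) = ((Emat dims C)ᵀ * ((Gt⁻¹)ᵀ * (Qt * (Gt⁻¹ * Emat dims C)))) := by
      rw [Matrix.transpose_mul, Matrix.mul_assoc, Matrix.mul_assoc]
    have hPmN : (((Emat dims C)ᵀ * Gt⁻¹ * Emat dims C) + ((Emat dims C)ᵀ * Gt⁻¹ * Emat dims C)ᵀ - ((Gt⁻¹ * Emat dims C)ᵀ * Qt * (Gt⁻¹ * Emat dims C))) = (((Emat dims C)ᵀ * (Gt⁻¹ * Emat dims C)) + ((Emat dims C)ᵀ * ((Gt⁻¹)ᵀ * Emat dims C)) - ((Emat dims C)ᵀ * ((Gt⁻¹)ᵀ * (Qt * (Gt⁻¹ * Emat dims C))))) := by rw [hHmTN, hSmN, hHmN]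
    have hCMN : ((((Emat dims C)ᵀ * Gt⁻¹ * Emat dims C)⁻¹)ᵀ * ((Gt⁻¹ * Emat dims C)ᵀ * Qt * (Gt⁻¹ * Emat dims C)) * ((Emat dims C)ᵀ * Gt⁻¹ * Emat dims C)⁻¹) = ((((Emat dims C)ᵀ * (Gt⁻¹ * Emat dims C))⁻¹)ᵀ * (((Emat dims C)ᵀ * ((Gt⁻¹)ᵀ * (Qt * (Gt⁻¹ * Emat dims C)))) * ((Emat dims C)ᵀ * (Gt⁻¹ * Emat dims C))⁻¹)) := by rw [hSmN, hHmN, Matrix.mul_assoc]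
    have hPpdN : (((Emat dims C)ᵀ * (Gt⁻¹ * Emat dims C)) + ((Emat dims C)ᵀ * ((Gt⁻¹)ᵀ * Emat dims C)) - ((Emat dims C)ᵀ * ((Gt⁻¹)ᵀ * (Qt * (Gt⁻¹ * Emat dims C))))).PosDef := by rwa [hPmN] at hPpd
    have hDpsdN : ((((Emat dims C)ᵀ * (Gt⁻¹ * Emat dims C)) + ((Emat dims C)ᵀ * ((Gt⁻¹)ᵀ * Emat dims C)) - ((Emat dims C)ᵀ * ((Gt⁻¹)ᵀ * (Qt * (Gt⁻¹ * Emat dims C)))))⁻¹ - ((((Emat dims C)ᵀ * (Gt⁻¹ * Emat dims C))⁻¹)ᵀ * (((Emat dims C)ᵀ * ((Gt⁻¹)ᵀ * (Qt * (Gt⁻¹ * Emat dims C)))) * ((Emat dims C)ᵀ * (Gt⁻¹ * Emat dims C))⁻¹))).PosSemidef := by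
      rwa [hPmN, hCMN] at hDpsd
    refine ⟨(((Emat dims C)ᵀ * (Gt⁻¹ * Emat dims C)) + ((Emat dims C)ᵀ * ((Gt⁻¹)ᵀ * Emat dims C)) - ((Emat dims C)ᵀ * ((Gt⁻¹)ᵀ * (Qt * (Gt⁻¹ * Emat dims C))))), hPpdN, ?_⟩
    -- injectivity of the congruence transformation
    have hR1Ninj : ∀ x : Idx dims → ℝ, (Gt⁻¹ * (Emat dims C * ((Emat dims C)ᵀ * (Gt⁻¹ * Emat dims C))⁻¹)) *ᵥ x = 0 → x = 0 := by
      intro x hx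
      apply hR1inj x
      rw [show Gt⁻¹ * Emat dims C * ((Emat dims C)ᵀ * Gt⁻¹ * Emat dims C)⁻¹ = (Gt⁻¹ * (Emat dims C * ((Emat dims C)ᵀ * (Gt⁻¹ * Emat dims C))⁻¹)) from by rw [hHmN, Matrix.mul_assoc]]
      exact hx
    have hRinj : ∀ x : ((Idx dims ⊕ Idx dims) ⊕ (Fin mv ⊕ Fin l)) → ℝ,
        (fromBlocks (fromBlocks (Gt⁻¹ * (Emat dims C * ((Emat dims C)ᵀ * (Gt⁻¹ * Emat dims C))⁻¹)) 0 0 (Gt⁻¹ * Emat dims C)) 0 0 (1 : Matrix (Fin mv ⊕ Fin l) (Fin mv ⊕ Fin l) ℝ)) *ᵥ x = 0 → x = 0 := by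
      intro x hx
      rw [Matrix.fromBlocks_mulVec] at hx
      simp only [Matrix.zero_mulVec, Matrix.one_mulVec, add_zero, zero_add,
        Matrix.fromBlocks_mulVec] at hx
      have e1 : (Gt⁻¹ * (Emat dims C * ((Emat dims C)ᵀ * (Gt⁻¹ * Emat dims C))⁻¹)) *ᵥ (x ∘ Sum.inl ∘ Sum.inl) = 0 := by
        funext s
        have := congrFun hx (Sum.inl (Sum.inl s))
        simpa [Function.comp_assoc] using this
      have e2 : (Gt⁻¹ * Emat dims C) *ᵥ (x ∘ Sum.inl ∘ Sum.inr) = 0 := by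
        funext s
        have := congrFun hx (Sum.inl (Sum.inr s))
        simpa [Function.comp_assoc] using this
      have f1 := hR1Ninj _ e1
      have f2 := hWinj _ e2
      funext p
      rcases p with (p | p)
      · rcases p with (p | p)
        · exact congrFun f1 p
        · exact congrFun f2 p
      · have := congrFun hx (Sum.inr p)
        simpa using this
    -- the key congruence identity, block by block
    have hTL : (fromBlocks (Gt⁻¹ * (Emat dims C * ((Emat dims C)ᵀ * (Gt⁻¹ * Emat dims C))⁻¹)) 0 0 (Gt⁻¹ * Emat dims C))ᵀ * (fromBlocks (-Qt + ρ • (Gtᵀ * N0 dims C * Gt)) (tilde dims C A * Gt + tilde dims C B * Zt) (tilde dims C A * Gt + tilde dims C B * Zt)ᵀ (Qt - Gt - Gtᵀ + ρ • (Gtᵀ * N0 dims C * Gt))) * (fromBlocks (Gt⁻¹ * (Emat dims C * ((Emat dims C)ᵀ * (Gt⁻¹ * Emat dims C))⁻¹)) 0 0 (Gt⁻¹ * Emat dims C)) + fromBlocks (((((Emat dims C)ᵀ * (Gt⁻¹ * Emat dims C))⁻¹)ᵀ * (((Emat dims C)ᵀ * ((Gt⁻¹)ᵀ * (Qt * (Gt⁻¹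 * Emat dims C)))) * ((Emat dims C)ᵀ * (Gt⁻¹ * Emat dims C))⁻¹)) - (((Emat dims C)ᵀ * (Gt⁻¹ * Emat dims C)) + ((Emat dims C)ᵀ * ((Gt⁻¹)ᵀ * Emat dims C)) - ((Emat dims C)ᵀ * ((Gt⁻¹)ᵀ * (Qt * (Gt⁻¹ * Emat dims C)))))⁻¹) 0 0 0
        = fromBlocks (-((((Emat dims C)ᵀ * (Gt⁻¹ * Emat dims C)) + ((Emat dims C)ᵀ * ((Gt⁻¹)ᵀ * Emat dims C)) - ((Emat dims C)ᵀ * ((Gt⁻¹)ᵀ * (Qt * (Gt⁻¹ * Emat dims C)))))⁻¹)) (A + B * gainCl dims C Zt Gt) (A + B * gainCl dims C Zt Gt)ᵀ (-(((Emat dims C)ᵀ * (Gt⁻¹ * Emat dims C)) + ((Emat dims C)ᵀ * ((Gt⁻¹)ᵀ * Emat dims C)) - ((Emat dims C)ᵀ * ((Gt⁻¹)ᵀ * (Qt * (Gt⁻¹ * Emat dims C)))))) := by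
      rw [fromBlocks_transpose, fromBlocks_multiply, fromBlocks_multiply, fromBlocks_add]
      simp only [Matrix.mul_zero, Matrix.zero_mul, add_zero, zero_add, transpose_zero]
      refine fromBlocks_inj.mpr ⟨?_, ?_, ?_, ?_⟩
      all_goals
        · simp only [tilde, gainCl, Matrix.transpose_mul, transpose_transpose, transpose_add,
            transpose_sub, Matrix.transpose_smul, Matrix.neg_mul, Matrix.mul_neg,
            Matrix.sub_mul, Matrix.mul_sub, Matrix.add_mul, Matrix.mul_add, Matrix.mul_smul,
            Matrix.smul_mul, Matrix.mul_assoc, cGGi, cGtT, cTiT1, cTTi2, cN0F1, hN0F, hTiT,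
            hTsymm, cHt1, cHf0, Matrix.mul_zero, Matrix.zero_mul, smul_zero, add_zero,
            zero_add, neg_zero, Matrix.mul_one, Matrix.one_mul]
          try rfl
          try abel
    have hTR : (fromBlocks (Gt⁻¹ * (Emat dims C * ((Emat dims C)ᵀ * (Gt⁻¹ * Emat dims C))⁻¹)) 0 0 (Gt⁻¹ * Emat dims C))ᵀ * (fromBlocks (Emat dims C * Bv) 0 0 (Cm * ((Emat dims C)ᵀ * Emat dims C)⁻¹ * (Emat dims C)ᵀ * Gt + Dm * ((Emat dims C)ᵀ * Emat dims C)⁻¹ * (Emat dims C)ᵀ * Zt)ᵀ) = fromBlocks Bv 0 0 (Cm + Dm * gainCl dims C Zt Gt)ᵀ := by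
      rw [fromBlocks_transpose, fromBlocks_multiply]
      simp only [Matrix.mul_zero, Matrix.zero_mul, add_zero, zero_add, transpose_zero]
      refine fromBlocks_inj.mpr ⟨?_, ?_, ?_, ?_⟩
      all_goals
        · simp only [tilde, gainCl, Matrix.transpose_mul, transpose_transpose, transpose_add,
            transpose_sub, Matrix.transpose_smul, Matrix.neg_mul, Matrix.mul_neg,
            Matrix.sub_mul, Matrix.mul_sub, Matrix.add_mul, Matrix.mul_add, Matrix.mul_smul,
            Matrix.smul_mul, Matrix.mul_assoc, cGGi, cGtT, cTiT1, cTTi2, cN0F1, hN0F, hTiT,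
            hTsymm, cHt1, cHf0, Matrix.mul_zero, Matrix.zero_mul, smul_zero, add_zero,
            zero_add, neg_zero, Matrix.mul_one, Matrix.one_mul]
          try rfl
          try abel
    have hBL : (fromBlocks (Emat dims C * Bv)ᵀ 0 0 (Cm * ((Emat dims C)ᵀ * Emat dims C)⁻¹ * (Emat dims C)ᵀ * Gt + Dm * ((Emat dims C)ᵀ * Emat dims C)⁻¹ * (Emat dims C)ᵀ * Zt)) * (fromBlocks (Gt⁻¹ * (Emat dims C * ((Emat dims C)ᵀ * (Gt⁻¹ * Emat dims C))⁻¹)) 0 0 (Gt⁻¹ * Emat dims C)) = fromBlocks Bvᵀ 0 0 (Cm + Dm * gainCl dims C Zt Gt) := by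
      rw [fromBlocks_multiply]
      simp only [Matrix.mul_zero, Matrix.zero_mul, add_zero, zero_add]
      refine fromBlocks_inj.mpr ⟨?_, ?_, ?_, ?_⟩
      all_goals
        · simp only [tilde, gainCl, Matrix.transpose_mul, transpose_transpose, transpose_add,
            transpose_sub, Matrix.transpose_smul, Matrix.neg_mul, Matrix.mul_neg,
            Matrix.sub_mul, Matrix.mul_sub, Matrix.add_mul, Matrix.mul_add, Matrix.mul_smul,
            Matrix.smul_mul, Matrix.mul_assoc, cGGi, cGtT, cTiT1, cTTi2, cN0F1, hN0F, hTiT,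
            hTsymm, cHt1, cHf0, Matrix.mul_zero, Matrix.zero_mul, smul_zero, add_zero,
            zero_add, neg_zero, Matrix.mul_one, Matrix.one_mul]
          try rfl
          try abel
    have hLam : (Theta dims C A B Bv Cm Dm Dw γ Gt Qt Zt + Pert dims C mv l (ρ • (Gtᵀ * N0 dims C * Gt))) = fromBlocks (fromBlocks (-Qt + ρ • (Gtᵀ * N0 dims C * Gt)) (tilde dims C A * Gt + tilde dims C B * Zt) (tilde dims C A * Gt + tilde dims C B * Zt)ᵀ (Qt - Gt - Gtᵀ + ρ • (Gtᵀ * N0 dims C * Gt))) (fromBlocks (Emat dims C * Bv) 0 0 (Cm * ((Emat dims C)ᵀ * Emat dims C)⁻¹ * (Emat dims C)ᵀ * Gt + Dm * ((Emat dims C)ᵀ * Emat dims C)⁻¹ * (Emat dims C)ᵀ * Zt)ᵀ) (fromBlocks (Emat dims C * Bv)ᵀ 0 0 (Cm * ((Emat dims C)ᵀ * Emat dims C)⁻¹ * (Emat dims C)ᵀ * Gt + Dm * ((Emat dims C)ᵀ * Emat dims C)⁻¹ * (Emat dims C)ᵀ * Zt)) (fromBlocks (-(γ • (1 : Matrix (Fin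 mv) (Fin mv) ℝ))) Dwᵀ Dw (-(γ • (1 : Matrix (Fin l) (Fin l) ℝ)))) := by
      simp only [Theta, Pert, fromBlocks_add, add_zero]
    have hkeypos : BRLclosed dims A B Bv Cm Dm Dw γ (gainCl dims C Zt Gt) (((Emat dims C)ᵀ * (Gt⁻¹ * Emat dims C)) + ((Emat dims C)ᵀ * ((Gt⁻¹)ᵀ * Emat dims C)) - ((Emat dims C)ᵀ * ((Gt⁻¹)ᵀ * (Qt * (Gt⁻¹ * Emat dims C)))))
        = (fromBlocks (fromBlocks (Gt⁻¹ * (Emat dims C * ((Emat dims C)ᵀ * (Gt⁻¹ * Emat dims C))⁻¹)) 0 0 (Gt⁻¹ * Emat dims C)) 0 0 (1 : Matrix (Fin mv ⊕ Fin l) (Fin mv ⊕ Fin l) ℝ))ᵀ * (Theta dims C A B Bv Cm Dm Dw γ Gt Qt Zt + Pert dims C mv l (ρ • (Gtᵀ * N0 dims C * Gt))) * (fromBlocks (fromBlocks (Gt⁻¹ * (Emat dims C * ((Emat dims C)ᵀ * (Gt⁻¹ * Emat dims C))⁻¹)) 0 0 (Gt⁻¹ * Emat dims C)) 0 0 (1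 : Matrix (Fin mv ⊕ Fin l) (Fin mv ⊕ Fin l) ℝ)) + (fromBlocks (fromBlocks (((((Emat dims C)ᵀ * (Gt⁻¹ * Emat dims C))⁻¹)ᵀ * (((Emat dims C)ᵀ * ((Gt⁻¹)ᵀ * (Qt * (Gt⁻¹ * Emat dims C)))) * ((Emat dims C)ᵀ * (Gt⁻¹ * Emat dims C))⁻¹)) - (((Emat dims C)ᵀ * (Gt⁻¹ * Emat dims C)) + ((Emat dims C)ᵀ * ((Gt⁻¹)ᵀ * Emat dims C)) - ((Emat dims C)ᵀ * ((Gt⁻¹)ᵀ * (Qt * (Gt⁻¹ * Emat dims C)))))⁻¹) 0 0 0) 0 0 (0 : Matrix (Fin mv ⊕ Fin l) (Fin mv ⊕ Fin l) ℝ)) := by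
      rw [hLam, BRLclosed]
      rw [show ((fromBlocks (fromBlocks (Gt⁻¹ * (Emat dims C * ((Emat dims C)ᵀ * (Gt⁻¹ * Emat dims C))⁻¹)) 0 0 (Gt⁻¹ * Emat dims C)) 0 0 (1 : Matrix (Fin mv ⊕ Fin l) (Fin mv ⊕ Fin l) ℝ)))ᵀ = fromBlocks ((fromBlocks (Gt⁻¹ * (Emat dims C * ((Emat dims C)ᵀ * (Gt⁻¹ * Emat dims C))⁻¹)) 0 0 (Gt⁻¹ * Emat dims C)))ᵀ 0 0 (1 : Matrix (Fin mv ⊕ Fin l) (Fin mv ⊕ Fin l) ℝ) from by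
        rw [fromBlocks_transpose, transpose_zero, transpose_zero, transpose_one]]
      rw [fromBlocks_multiply, fromBlocks_multiply, fromBlocks_add]
      simp only [Matrix.mul_zero, Matrix.zero_mul, add_zero, zero_add, Matrix.mul_one,
        Matrix.one_mul]
      refine fromBlocks_inj.mpr ⟨?_, ?_, ?_, ?_⟩
      · exact hTL.symm
      · exact hTR.symm
      · exact hBL.symm
      · rfl
    -- conclude
    have hkey : -(BRLclosed dims A B Bv Cm Dm Dw γ (gainCl dims C Zt Gt) (((Emat dims C)ᵀ * (Gt⁻¹ * Emat dims C)) + ((Emat dims C)ᵀ * ((Gt⁻¹)ᵀ * Emat dims C)) - ((Emat dims C)ᵀ * ((Gt⁻¹)ᵀ * (Qt * (Gt⁻¹ * Emat dims C))))))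
        = (fromBlocks (fromBlocks (Gt⁻¹ * (Emat dims C * ((Emat dims C)ᵀ * (Gt⁻¹ * Emat dims C))⁻¹)) 0 0 (Gt⁻¹ * Emat dims C)) 0 0 (1 : Matrix (Fin mv ⊕ Fin l) (Fin mv ⊕ Fin l) ℝ))ᵀ * (-(Theta dims C A B Bv Cm Dm Dw γ Gt Qt Zt + Pert dims C mv l (ρ • (Gtᵀ * N0 dims C * Gt)))) * (fromBlocks (fromBlocks (Gt⁻¹ * (Emat dims C * ((Emat dims C)ᵀ * (Gt⁻¹ * Emat dims C))⁻¹)) 0 0 (Gt⁻¹ * Emat dims C)) 0 0 (1 : Matrix (Fin mv ⊕ Fin l) (Fin mv ⊕ Fin l) ℝ)) + (fromBlocks (fromBlocks ((((Emat dims C)ᵀ * (Gt⁻¹ * Emat dims C)) + ((Emat dims C)ᵀ * ((Gt⁻¹)ᵀ * Emat dims C)) - ((Emat dims C)ᵀ * ((Gt⁻¹)ᵀ * (Qt * (Gt⁻¹ * Emat dims C)))))⁻¹ - ((((Emat dims C)ᵀ * (Gt⁻¹ * Emat dims C))⁻¹)ᵀ * (((Emat dims C)ᵀ * ((Gt⁻¹)ᵀ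 * (Qt * (Gt⁻¹ * Emat dims C)))) * ((Emat dims C)ᵀ * (Gt⁻¹ * Emat dims C))⁻¹))) 0 0 0) 0 0 (0 : Matrix (Fin mv ⊕ Fin l) (Fin mv ⊕ Fin l) ℝ)) := by
      rw [hkeypos, neg_add, Matrix.mul_neg, Matrix.neg_mul]
      congr 1
      rw [fromBlocks_neg, fromBlocks_neg]
      simp only [neg_zero, neg_sub]
    rw [NegDef, hkey]
    exact Matrix.PosDef.add_posSemidef (posDef_conjT h (fromBlocks (fromBlocks (Gt⁻¹ * (Emat dims C * ((Emat dims C)ᵀ * (Gt⁻¹ * Emat dims C))⁻¹)) 0 0 (Gt⁻¹ * Emat dims C)) 0 0 (1 : Matrix (Fin mv ⊕ Fin l) (Fin mv ⊕ Fin l) ℝ)) hRinj)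
      (psd_fromBlocks_diag (psd_fromBlocks_diag hDpsdN Matrix.PosSemidef.zero)
        Matrix.PosSemidef.zero)
end
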